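/- arXiv:1504.08107 — 4 statements merged into one kernel-verified Lean document; each statement's English description precedes it below -/
import Mathlib

section
/- Let $G$ be a 2-connected graph on at least 3 vertices and let $x \in V(G)$. Then there exists an edge $xy \in E(G)$ incident to $x$ such that the graph $G/xy$ obtained by contracting $xy$ is 2-connected (or is isomorphic to $K_2$). -/
/-- A graph is 2-connected: at least 3 vertices, connected, and no cut vertex. -/
def TwoConnected {V : Type*} [Fintype V] (G : SimpleGraph V) : Prop :=
  3 ≤ Fintype.card V ∧ G.Connected ∧
    ∀ v : V, (((⊤ : G.Subgraph).deleteVerts {v}).coe.Connected)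

/-- The graph obtained from `G` by contracting the edge `xy` (identifying `y`
into `x`, removing loops and multiple edges). -/
def contractEdge {V : Type*} [DecidableEq V] (G : SimpleGraph V) (x y : V) :
    SimpleGraph {z : V // z ≠ y} where
  Adj a b := a ≠ b ∧ (G.Adj a b ∨ (a.1 = x ∧ G.Adj y b) ∨ (b.1 = x ∧ G.Adj y a))
  symm := by
    constructor
    rintro a b ⟨hne, h⟩
    refine ⟨hne.symm, ?_⟩
    rcases h with h | ⟨h1, h2⟩ | ⟨h1, h2⟩
    · exact Or.inl h.symm
    · exact Or.inr (Or.inr ⟨h1, h2⟩)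
    · exact Or.inr (Or.inl ⟨h1, h2⟩)
  loopless := ⟨fun a h => h.1 rfl⟩

namespace ContractAux

open SimpleGraph

set_option linter.unusedSectionVars false

variable {V : Type*} [Fintype V] [DecidableEq V] {G : SimpleGraph V}

/-- Reachability within a vertex set `A`. -/
def AReach (G : SimpleGraph V) (A : Set V) (u v : V) : Prop :=
  ∃ p : G.Walk u v, ∀ z ∈ p.support, z ∈ A

variable {A B : Set V} {u v w z : V}

lemma AReach.refl (hu : u ∈ A) : AReach G A u u :=
  ⟨Walk.nil, by simpa using hu⟩

lemma AReach.symm (h : AReach G A u v) : AReach G A v u := by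
  obtain ⟨p, hp⟩ := h
  exact ⟨p.reverse, fun z hz => hp z (by simpa [Walk.support_reverse] using hz)⟩

lemma AReach.trans (h : AReach G A u v) (h' : AReach G A v w) : AReach G A u w := by
  obtain ⟨p, hp⟩ := h; obtain ⟨q, hq⟩ := h'
  exact ⟨p.append q, fun z hz => ((Walk.mem_support_append_iff p q).mp hz).elim (hp z) (hq z)⟩

lemma AReach.mem_left (h : AReach G A u v) : u ∈ A := by
  obtain ⟨p, hp⟩ := h; exact hp _ p.start_mem_support

lemma AReach.mem_right (h : AReach G A u v) : v ∈ A := by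
  obtain ⟨p, hp⟩ := h; exact hp _ p.end_mem_support

lemma AReach.mono (hAB : A ⊆ B) (h : AReach G A u v) : AReach G B u v := by
  obtain ⟨p, hp⟩ := h; exact ⟨p, fun z hz => hAB (hp z hz)⟩

lemma areach_of_mem_support {p : G.Walk u v} (hp : ∀ z ∈ p.support, z ∈ A)
    (hz : z ∈ p.support) : AReach G A z v := by
  induction p with
  | nil =>
    simp only [Walk.support_nil, List.mem_singleton] at hz
    subst hz
    exact AReach.refl (hp _ (by simp))
  | cons h q ih =>
    rw [Walk.support_cons, List.mem_cons] at hz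
    rcases hz with rfl | hz
    · exact ⟨Walk.cons h q, hp⟩
    · exact ih (fun z' hz' => hp z' (by simp [Walk.support_cons, hz'])) hz

lemma areach_start {p : G.Walk u v} (hp : ∀ z ∈ p.support, z ∈ A)
    (hz : z ∈ p.support) : AReach G A u z := by
  have : AReach G A z u :=
    areach_of_mem_support (p := p.reverse)
      (fun z' hz' => hp z' (by simpa [Walk.support_reverse] using hz'))
      (by simpa [Walk.support_reverse] using hz)
  exact this.symm

lemma AReach.strengthen (h : AReach G A u v) (hB : ∀ z, AReach G A u z → z ∈ B) :
    AReach G B u v := by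
  obtain ⟨p, hp⟩ := h
  exact ⟨p, fun z hz => hB z (areach_start hp hz)⟩

/-- Extract a walk avoiding `c` from connectivity of `G` minus `c`. -/
lemma areach_of_delete {c : V}
    (hc : ((⊤ : G.Subgraph).deleteVerts {c}).coe.Connected)
    (hu : u ≠ c) (hv : v ≠ c) : AReach G {z | z ≠ c} u v := by
  have hmu : u ∈ ((⊤ : G.Subgraph).deleteVerts {c}).verts := ⟨trivial, by simpa using hu⟩
  have hmv : v ∈ ((⊤ : G.Subgraph).deleteVerts {c}).verts := ⟨trivial, by simpa using hv⟩
  obtain ⟨q⟩ := hc.preconnected ⟨u, hmu⟩ ⟨v, hmv⟩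
  refine ⟨q.map (Subgraph.hom _), ?_⟩
  intro z hz
  have hz : z ∈ q.support.map (Subgraph.hom _) := by rw [← Walk.support_map]; exact hz
  obtain ⟨z', _, rfl⟩ := List.mem_map.mp hz
  exact fun h => z'.2.2 (by simpa using h)

/-- First edge of a path from `a` to `b ≠ a`: a neighbor `t` of `a` from which `b`
is reachable avoiding `a`. -/
lemma exists_first_edge {a b : V} (w0 : G.Walk a b) (hab : a ≠ b)
    (hsup : ∀ z ∈ w0.support, z ∈ A) :
    ∃ t, G.Adj a t ∧ AReach G (A \ {a}) t b := by
  obtain ⟨p, hp, hsub⟩ : ∃ p : G.Walk a b, p.IsPath ∧ p.support ⊆ w0.support :=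
    ⟨w0.toPath, w0.toPath.2, Walk.support_toPath_subset w0⟩
  cases p with
  | nil => exact absurd rfl hab
  | cons h q =>
    rw [Walk.cons_isPath_iff] at hp
    refine ⟨_, h, q, fun z hz => ⟨hsup z (hsub (by simp [Walk.support_cons, hz])), ?_⟩⟩
    intro hza
    rw [Set.mem_singleton_iff] at hza
    subst hza
    exact hp.2 hz

/-- The key lemma: there is a neighbor `y` of `x` such that `G - x - y` is
connected. -/
lemma key (h2c : TwoConnected G) (x : V) :
    ∃ y, G.Adj x y ∧ ∀ u v, u ≠ x → u ≠ y → v ≠ x → v ≠ y →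
      AReach G {z | z ≠ x ∧ z ≠ y} u v := by
  classical
  obtain ⟨hcard, hconn, hdel⟩ := h2c
  -- there is at least one admissible pair (neighbor, other vertex)
  have hpair : ∃ y w, G.Adj x y ∧ w ≠ x ∧ w ≠ y := by
    have hnt : Nontrivial V := Fintype.one_lt_card_iff_nontrivial.mp (by omega)
    obtain ⟨u, hu⟩ := exists_ne x
    obtain ⟨p⟩ := hconn.preconnected x u
    obtain ⟨t, hxt, -⟩ :=
      exists_first_edge (A := Set.univ) p (Ne.symm hu) (fun z _ => trivial)
    have hw : ((Finset.univ : Finset V) \ {x, t}).Nonempty := by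
      rw [← Finset.card_pos, Finset.card_sdiff_of_subset (Finset.subset_univ _)]
      have h2 : ({x, t} : Finset V).card ≤ 2 :=
        (Finset.card_insert_le _ _).trans (by simp)
      have := Finset.card_univ (α := V)
      omega
    obtain ⟨w, hw⟩ := hw
    simp only [Finset.mem_sdiff, Finset.mem_insert, Finset.mem_singleton] at hw
    exact ⟨t, w, hxt, fun h => hw.2 (Or.inl h), fun h => hw.2 (Or.inr h)⟩
  obtain ⟨y0, w0, hy0, hw0x, hw0y⟩ := hpair
  -- maximize the size of the reachability class of p.2 in G - x - p.1
  set m : V × V → ℕ := fun p =>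
    (Finset.univ.filter (fun z => AReach G {z' | z' ≠ x ∧ z' ≠ p.1} p.2 z)).card with hm
  set P : Finset (V × V) :=
    Finset.univ.filter (fun p => G.Adj x p.1 ∧ p.2 ≠ x ∧ p.2 ≠ p.1) with hPdef
  have hP0 : ((y0, w0) : V × V) ∈ P := by simp [hPdef, hy0, hw0x, hw0y]
  obtain ⟨⟨y, w⟩, hmem, hmax⟩ := P.exists_max_image m ⟨_, hP0⟩
  simp only [hPdef, Finset.mem_filter, Finset.mem_univ, true_and] at hmem
  obtain ⟨hxy, hwx, hwy⟩ := hmem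
  set A : Set V := {z | z ≠ x ∧ z ≠ y} with hA
  have hyx : y ≠ x := hxy.ne'
  -- every admissible vertex is A-reachable from w
  have H1 : ∀ u, u ≠ x → u ≠ y → AReach G A w u := by
    intro u hux huy
    by_contra hnr
    -- u reaches some neighbor s of x within A
    obtain ⟨p, hp⟩ := areach_of_delete (hdel y) (Ne.symm hyx) huy
    obtain ⟨s, hxs, hsu⟩ := exists_first_edge p hux.symm hp
    have hsu : AReach G A s u := hsu.mono (by
      rintro z ⟨hz1, hz2⟩
      exact ⟨by simpa using hz2, hz1⟩)
    have hns : ¬ AReach G A w s := fun h => hnr (h.trans hsu)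
    have hsy : s ≠ y := hsu.mem_left.2
    have hsx : s ≠ x := hsu.mem_left.1
    -- y has a neighbor t which is A-reachable from w
    obtain ⟨q, hq⟩ := areach_of_delete (hdel x) hyx hwx
    obtain ⟨t, hyt, htw⟩ := exists_first_edge q (Ne.symm hwy) hq
    have htw : AReach G A t w := htw.mono (by
      rintro z ⟨hz1, hz2⟩
      exact ⟨hz1, by simpa using hz2⟩)
    -- pass to the set B avoiding x and s
    set B : Set V := {z | z ≠ x ∧ z ≠ s} with hB
    have hAB : ∀ z', AReach G A w z' → z' ∈ B := by
      intro z' hz'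
      refine ⟨hz'.mem_right.1, ?_⟩
      rintro rfl
      exact hns hz'
    have hyB : y ∈ B := ⟨hyx, Ne.symm hsy⟩
    have hyt' : AReach G B y t := by
      refine ⟨Walk.cons hyt Walk.nil, ?_⟩
      intro z hz
      simp only [Walk.support_cons, Walk.support_nil, List.mem_cons,
        List.mem_singleton, List.not_mem_nil, or_false] at hz
      rcases hz with rfl | rfl
      · exact hyB
      · exact hAB _ htw.symm
    have hsubcl : ∀ z', AReach G A w z' → AReach G B y z' := by
      intro z' hz'
      exact hyt'.trans (((htw.trans hz').strengthen
        (fun z'' hz'' => hAB z'' (htw.symm.trans hz''))))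
    -- (s, y) is an admissible pair with strictly larger class
    have hPsy : ((s, y) : V × V) ∈ P := by
      simp [hPdef, hxs, hyx, Ne.symm hsy]
    have hlt : m (y, w) < m (s, y) := by
      apply Finset.card_lt_card
      rw [Finset.ssubset_iff_of_subset]
      · refine ⟨y, ?_, ?_⟩
        · simp only [Finset.mem_filter, Finset.mem_univ, true_and]
          exact AReach.refl hyB
        · simp only [Finset.mem_filter, Finset.mem_univ, true_and]
          intro h
          exact h.mem_right.2 rfl
      · intro z hz
        simp only [Finset.mem_filter, Finset.mem_univ, true_and] at hz ⊢
        exact hsubcl z hz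
    exact absurd (hmax _ hPsy) (not_le.mpr hlt)
  exact ⟨y, hxy, fun u v hux huy hvx hvy => (H1 u hux huy).symm.trans (H1 v hvx hvy)⟩


/-- The map `V → {z // z ≠ y}` collapsing `y` onto `x`. -/
def pushto (x y : V) (hxy : x ≠ y) : V → {z : V // z ≠ y} :=
  fun z => if h : z = y then ⟨x, hxy⟩ else ⟨z, h⟩

lemma pushto_val {x y : V} (hxy : x ≠ y) {z : V} (h : z ≠ y) :
    pushto x y hxy z = ⟨z, h⟩ := dif_neg h

lemma pushto_y {x y : V} (hxy : x ≠ y) : pushto x y hxy y = ⟨x, hxy⟩ := dif_pos rfl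

lemma contract_adj {x y : V} (hxy : x ≠ y) {u t : V} (h : G.Adj u t)
    (hne : pushto x y hxy u ≠ pushto x y hxy t) :
    (contractEdge G x y).Adj (pushto x y hxy u) (pushto x y hxy t) := by
  show _ ≠ _ ∧ _
  refine ⟨hne, ?_⟩
  by_cases hu : u = y <;> by_cases ht : t = y
  · exact absurd (hu.trans ht.symm) h.ne
  · subst hu
    rw [pushto_y, pushto_val hxy ht]
    exact Or.inr (Or.inl ⟨rfl, h⟩)
  · subst ht
    rw [pushto_y, pushto_val hxy hu]
    exact Or.inr (Or.inr ⟨rfl, h.symm⟩)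
  · rw [pushto_val hxy hu, pushto_val hxy ht]
    exact Or.inl h

lemma contract_reach {x y : V} (hxy : x ≠ y) {u v : V} (p : G.Walk u v) :
    (contractEdge G x y).Reachable (pushto x y hxy u) (pushto x y hxy v) := by
  induction p with
  | nil => exact Reachable.refl _
  | @cons a b c h q ih =>
    by_cases he : pushto x y hxy a = pushto x y hxy b
    · exact he ▸ ih
    · exact (contract_adj hxy h he).reachable.trans ih

lemma contract_reach_avoid {x y : V} (hxy : x ≠ y) (v : {z : V // z ≠ y}) {u w : V}
    (p : G.Walk u w) (hp : ∀ z ∈ p.support, pushto x y hxy z ≠ v)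
    (a b : ↥(((⊤ : (contractEdge G x y).Subgraph).deleteVerts {v}).verts))
    (ha : a.1 = pushto x y hxy u) (hb : b.1 = pushto x y hxy w) :
    (((⊤ : (contractEdge G x y).Subgraph).deleteVerts {v}).coe).Reachable a b := by
  induction p generalizing a with
  | nil =>
    have : a = b := Subtype.ext (ha.trans hb.symm)
    exact this ▸ Reachable.refl _
  | @cons u' t w' h q ih =>
    have ht : pushto x y hxy t ≠ v := hp t (by simp [Walk.support_cons])
    have hu' : pushto x y hxy u' ≠ v := hp u' (by simp [Walk.support_cons])
    set a' : ↥(((⊤ : (contractEdge G x y).Subgraph).deleteVerts {v}).verts) :=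
      ⟨pushto x y hxy t, ⟨Set.mem_univ _, by simpa using ht⟩⟩ with ha'
    have hq' : ∀ z ∈ q.support, pushto x y hxy z ≠ v :=
      fun z hz => hp z (by simp [Walk.support_cons, hz])
    by_cases he : pushto x y hxy u' = pushto x y hxy t
    · exact ih hq' a (ha.trans he) hb
    · refine (Adj.reachable ?_).trans (ih hq' a' rfl hb)
      rw [Subgraph.coe_adj, Subgraph.deleteVerts_adj]
      refine ⟨Set.mem_univ _, a.2.2, Set.mem_univ _, a'.2.2, ?_⟩
      rw [Subgraph.top_adj]
      show (contractEdge G x y).Adj a.1 a'.1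
      rw [ha]
      exact contract_adj hxy h he

lemma card_compl_single (y : V) :
    Fintype.card {z : V // z ≠ y} = Fintype.card V - 1 := by
  have h := Fintype.card_subtype_compl (fun z : V => z = y)
  simp only [Fintype.card_subtype_eq] at h
  convert h using 2

end ContractAux

/-- Every 2-connected graph on at least 3 vertices has, at each vertex `x`, an
incident edge `xy` whose contraction is biconnected (2-connected or `K₂`). -/
theorem exists_contractible_edge {V : Type*} [Fintype V] [DecidableEq V]
    (G : SimpleGraph V) (h2c : TwoConnected G) (x : V) :
    ∃ y : V, G.Adj x y ∧
      (TwoConnected (contractEdge G x y) ∨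
        (Fintype.card {z : V // z ≠ y} = 2 ∧
          ∀ a b : {z : V // z ≠ y}, a ≠ b → (contractEdge G x y).Adj a b)) := by
  classical
  obtain ⟨y, hxy, hA⟩ := ContractAux.key h2c x
  have hxny : x ≠ y := hxy.ne
  have hcard := h2c.1
  refine ⟨y, hxy, ?_⟩
  by_cases hc3 : Fintype.card V = 3
  · -- K₂ case
    refine Or.inr ⟨by rw [ContractAux.card_compl_single, hc3], ?_⟩
    have main : ∀ a : {z : V // z ≠ y}, a ≠ ⟨x, hxny⟩ →
        (contractEdge G x y).Adj a ⟨x, hxny⟩ := by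
      intro a ha
      have hax : a.1 ≠ x := fun h => ha (Subtype.ext h)
      have hay : a.1 ≠ y := a.2
      obtain ⟨p, hp⟩ := ContractAux.areach_of_delete (h2c.2.2 x) hxy.ne' hax
      obtain ⟨t, hyt, hta⟩ := ContractAux.exists_first_edge p (fun h => hay h.symm) hp
      have htx : t ≠ x := hta.mem_left.1
      have hty : t ≠ y := by
        have := hta.mem_left.2
        simpa using this
      have hta1 : t = a.1 := by
        by_contra hne
        have hc : ({x, y, t, a.1} : Finset V).card = 4 := by
          rw [Finset.card_insert_of_notMem (by simp [hxny, Ne.symm htx, Ne.symm hax]),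
            Finset.card_insert_of_notMem (by simp [Ne.symm hty, Ne.symm hay]),
            Finset.card_insert_of_notMem (by simp [hne]), Finset.card_singleton]
        have hle := Finset.card_le_univ ({x, y, t, a.1} : Finset V)
        rw [hc3, hc] at hle
        omega
      show _ ≠ _ ∧ _
      exact ⟨ha, Or.inr (Or.inr ⟨rfl, hta1 ▸ hyt⟩)⟩
    intro a b hab
    by_cases ha : a = ⟨x, hxny⟩
    · subst ha
      exact (main b (Ne.symm hab)).symm
    · by_cases hb : b = ⟨x, hxny⟩
      · exact hb ▸ main a ha
      · exfalso
        have hc : ({a, b, ⟨x, hxny⟩} : Finset {z : V // z ≠ y}).card = 3 := by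
          rw [Finset.card_insert_of_notMem (by simp [hab, ha]),
            Finset.card_insert_of_notMem (by simp [hb]), Finset.card_singleton]
        have hle := Finset.card_le_univ ({a, b, ⟨x, hxny⟩} : Finset {z : V // z ≠ y})
        rw [ContractAux.card_compl_single, hc3, hc] at hle
        omega
  · -- 2-connected case
    have hc4 : 4 ≤ Fintype.card V := by omega
    refine Or.inl ⟨?_, ?_, ?_⟩
    · rw [ContractAux.card_compl_single]; omega
    · rw [SimpleGraph.connected_iff]
      refine ⟨fun a b => ?_, ⟨⟨x, hxny⟩⟩⟩
      obtain ⟨p⟩ := h2c.2.1.preconnected a.1 b.1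
      have h2 := ContractAux.contract_reach (G := G) hxny p
      rw [ContractAux.pushto_val hxny a.2, ContractAux.pushto_val hxny b.2] at h2
      exact h2
    · intro v
      rw [SimpleGraph.connected_iff]
      constructor
      · intro a b
        have hav : a.1 ≠ v := by simpa using a.2.2
        have hbv : b.1 ≠ v := by simpa using b.2.2
        by_cases hvx : v.1 = x
        · have hax : a.1.1 ≠ x := fun h => hav (Subtype.ext (h.trans hvx.symm))
          have hbx : b.1.1 ≠ x := fun h => hbv (Subtype.ext (h.trans hvx.symm))
          obtain ⟨p, hp⟩ := hA a.1.1 b.1.1 hax a.1.2 hbx b.1.2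
          have hp' : ∀ z ∈ p.support, ContractAux.pushto x y hxny z ≠ v := by
            intro z hz h
            have hzA := hp z hz
            rw [ContractAux.pushto_val hxny hzA.2] at h
            exact hzA.1 ((congrArg Subtype.val h).trans hvx)
          exact ContractAux.contract_reach_avoid hxny v p hp' a b
            (ContractAux.pushto_val hxny a.1.2).symm
            (ContractAux.pushto_val hxny b.1.2).symm
        · have hav' : a.1.1 ≠ v.1 := fun h => hav (Subtype.ext h)
          have hbv' : b.1.1 ≠ v.1 := fun h => hbv (Subtype.ext h)
          obtain ⟨p, hp⟩ := ContractAux.areach_of_delete (h2c.2.2 v.1) hav' hbv'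
          have hp' : ∀ z ∈ p.support, ContractAux.pushto x y hxny z ≠ v := by
            intro z hz h
            by_cases hzy : z = y
            · subst hzy
              rw [ContractAux.pushto_y] at h
              exact hvx ((congrArg Subtype.val h).symm)
            · rw [ContractAux.pushto_val hxny hzy] at h
              exact (hp z hz) ((congrArg Subtype.val h))
          exact ContractAux.contract_reach_avoid hxny v p hp' a b
            (ContractAux.pushto_val hxny a.1.2).symm
            (ContractAux.pushto_val hxny b.1.2).symm
      · by_cases hvx : v.1 = x
        · have hw : ((Finset.univ : Finset V) \ {x, y}).Nonempty := by
            rw [← Finset.card_pos, Finset.card_sdiff_of_subset (Finset.subset_univ _)]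
            have h2 : ({x, y} : Finset V).card ≤ 2 :=
              (Finset.card_insert_le _ _).trans (by simp)
            have := Finset.card_univ (α := V)
            omega
          obtain ⟨z, hz⟩ := hw
          simp only [Finset.mem_sdiff, Finset.mem_insert, Finset.mem_singleton] at hz
          have hzx : z ≠ x := fun h => hz.2 (Or.inl h)
          have hzy : z ≠ y := fun h => hz.2 (Or.inr h)
          refine ⟨⟨⟨z, hzy⟩, Set.mem_univ _, ?_⟩⟩
          simp only [Set.mem_singleton_iff]
          exact fun h => hzx ((congrArg Subtype.val h).trans hvx)
        · refine ⟨⟨⟨x, hxny⟩, Set.mem_univ _, ?_⟩⟩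
          simp only [Set.mem_singleton_iff]
          exact fun h => hvx ((congrArg Subtype.val h).symm)
end

section
/- Let $\mathcal{A}$ be a minor-closed class of graphs, let $j \ge 1$. Then the apex width of order $j$ of $\mathcal{A}$ is finite if and only if some $j$-fan and some complete bipartite graph $K_{j+1,t}$ do not belong to $\mathcal{A}$. -/
/-- `H` is a minor of `G` (branch set definition). -/
def IsMinor {U V : Type*} (H : SimpleGraph U) (G : SimpleGraph V) : Prop :=
  ∃ B : U → Set V, (∀ u, (B u).Nonempty) ∧ (∀ u, (G.induce (B u)).Connected) ∧
    (Pairwise fun u u' => Disjoint (B u) (B u')) ∧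
    ∀ ⦃u u'⦄, H.Adj u u' → ∃ x ∈ B u, ∃ y ∈ B u', G.Adj x y

/-- The `j`-fan with `s` path vertices: a complete bipartite graph between
`Fin j` and `Fin s`, together with a path on `Fin s`. -/
def fanGraph (j s : ℕ) : SimpleGraph (Fin j ⊕ Fin s) where
  Adj x y :=
    (∃ a b, x = Sum.inl a ∧ y = Sum.inr b) ∨
    (∃ a b, x = Sum.inr a ∧ y = Sum.inl b) ∨
    (∃ a b : Fin s, x = Sum.inr a ∧ y = Sum.inr b ∧ (a.1 + 1 = b.1 ∨ b.1 + 1 = a.1))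
  symm := by
    constructor
    rintro x y (⟨a, b, rfl, rfl⟩ | ⟨a, b, rfl, rfl⟩ | ⟨a, b, rfl, rfl, h⟩)
    · exact Or.inr (Or.inl ⟨b, a, rfl, rfl⟩)
    · exact Or.inl ⟨b, a, rfl, rfl⟩
    · exact Or.inr (Or.inr ⟨b, a, rfl, rfl, h.symm⟩)
  loopless := by
    constructor
    rintro x (⟨a, b, rfl, h2⟩ | ⟨a, b, rfl, h2⟩ | ⟨a, b, rfl, h2, h3⟩) <;> simp_all

/-- The graph consisting of a tree `T` on `Fin m` together with the complete
bipartite graph between `V(T)` and `j` extra vertices. -/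
def treeApex {m : ℕ} (T : SimpleGraph (Fin m)) (j : ℕ) : SimpleGraph (Fin m ⊕ Fin j) where
  Adj x y :=
    (∃ a b, x = Sum.inl a ∧ y = Sum.inl b ∧ T.Adj a b) ∨
    (∃ a b, x = Sum.inl a ∧ y = Sum.inr b) ∨
    (∃ a b, x = Sum.inr a ∧ y = Sum.inl b)
  symm := by
    constructor
    rintro x y (⟨a, b, rfl, rfl, h⟩ | ⟨a, b, rfl, rfl⟩ | ⟨a, b, rfl, rfl⟩)
    · exact Or.inl ⟨b, a, rfl, rfl, h.symm⟩
    · exact Or.inr (Or.inr ⟨b, a, rfl, rfl⟩)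
    · exact Or.inr (Or.inl ⟨b, a, rfl, rfl⟩)
  loopless := by
    constructor
    rintro x (⟨a, b, rfl, h2, h3⟩ | ⟨a, b, rfl, h2⟩ | ⟨a, b, rfl, h2⟩) <;> simp_all

/-- A graph `G` belongs (up to isomorphism) to the class `A` of labelled graphs. -/
def MemClass (A : ∀ n : ℕ, Set (SimpleGraph (Fin n))) {W : Type*} (G : SimpleGraph W) : Prop :=
  ∃ (n : ℕ) (H : SimpleGraph (Fin n)), H ∈ A n ∧ Nonempty (G ≃g H)


open SimpleGraph Finset

lemma induce_singleton_connected {V : Type*} (G : SimpleGraph V) (x : V) :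
    (G.induce {x}).Connected := by
  haveI : Nonempty ({x} : Set V) := ⟨⟨x, rfl⟩⟩
  refine ⟨fun u v => ?_⟩
  have : u = v := Subtype.ext (u.2.trans v.2.symm)
  exact this ▸ Reachable.refl _

lemma induce_pair_connected {V : Type*} {G : SimpleGraph V} {a b : V} (hab : G.Adj a b) :
    (G.induce {a, b}).Connected := by
  have ha : a ∈ ({a, b} : Set V) := Or.inl rfl
  have hb : b ∈ ({a, b} : Set V) := Or.inr rfl
  have hadj : (G.induce {a, b}).Adj ⟨a, ha⟩ ⟨b, hb⟩ := hab
  haveI : Nonempty ({a, b} : Set V) := ⟨⟨a, ha⟩⟩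
  refine ⟨fun u v => ?_⟩
  have key : ∀ w : ({a, b} : Set V), (G.induce {a, b}).Reachable w ⟨a, ha⟩ := by
    rintro ⟨w, hw | hw⟩ <;> subst hw
    · exact Reachable.refl _
    · exact (hadj.symm).reachable
  exact (key u).trans (key v).symm

lemma IsMinor.of_iso_left {U U' V : Type*} {H : SimpleGraph U} {H' : SimpleGraph U'}
    {G : SimpleGraph V} (e : H ≃g H') (h : IsMinor H G) : IsMinor H' G := by
  obtain ⟨B, hne, hconn, hdisj, hadj⟩ := h
  refine ⟨fun u => B (e.symm u), fun u => hne _, fun u => hconn _, ?_, ?_⟩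
  · intro u u' huu'
    exact hdisj (e.symm.toEquiv.injective.ne huu')
  · intro u u' h'
    exact hadj (e.symm.map_rel_iff.mpr h')

lemma IsMinor.of_iso_right {U V V' : Type*} {H : SimpleGraph U} {G : SimpleGraph V}
    {G' : SimpleGraph V'} (e : G ≃g G') (h : IsMinor H G) : IsMinor H G' := by
  obtain ⟨B, hne, hconn, hdisj, hadj⟩ := h
  refine ⟨fun u => e '' (B u), fun u => (hne u).image _, fun u => ?_, ?_, ?_⟩
  · have iso : G.induce (B u) ≃g G'.induce (e '' (B u)) := by
      refine ⟨e.toEquiv.image (B u), ?_⟩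
      intro x y
      show G'.Adj _ _ ↔ G.Adj _ _
      exact e.map_rel_iff
    exact iso.connected_iff.mp (hconn u)
  · intro u u' huu'
    exact Set.disjoint_image_of_injective e.toEquiv.injective (hdisj huu')
  · intro u u' h'
    obtain ⟨x, hx, y, hy, hxy⟩ := hadj h'
    exact ⟨e x, Set.mem_image_of_mem _ hx, e y, Set.mem_image_of_mem _ hy, e.map_rel_iff.mpr hxy⟩

lemma walk_stay {V : Type*} {G : SimpleGraph V} (S : Set V)
    (hS : ∀ x y, x ∈ S → G.Adj x y → y ∈ S) {v w : V} (p : G.Walk v w) (hv : v ∈ S) : w ∈ S := by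
  induction p with
  | nil => exact hv
  | cons h q ih => exact ih (hS _ _ hv h)

lemma not_reachable_of_cut {V : Type*} {G : SimpleGraph V} (S : Set V)
    (hS : ∀ x y, x ∈ S → G.Adj x y → y ∈ S) {v w : V} (hv : v ∈ S) (hw : w ∉ S) :
    ¬ G.Reachable v w := by
  rintro ⟨p⟩
  exact hw (walk_stay S hS p hv)


/-- star graph on `Fin (m+1)` with center `0`. -/
def starG (m : ℕ) : SimpleGraph (Fin (m + 1)) where
  Adj x y := x ≠ y ∧ (x = 0 ∨ y = 0)
  symm := by constructor; rintro x y ⟨h1, h2⟩; exact ⟨h1.symm, h2.symm⟩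
  loopless := by constructor; rintro x ⟨h, _⟩; exact h rfl

lemma starG_connected (m : ℕ) : (starG m).Connected := by
  rw [connected_iff_exists_forall_reachable]
  refine ⟨0, fun w => ?_⟩
  by_cases hw : w = 0
  · subst hw; exact Reachable.refl _
  · exact SimpleGraph.Adj.reachable ⟨Ne.symm hw, Or.inl rfl⟩

lemma starG_isTree (m : ℕ) : (starG m).IsTree := by
  refine ⟨starG_connected m, ?_⟩
  rw [isAcyclic_iff_forall_adj_isBridge]
  intro v w hvw
  obtain ⟨hne, h0⟩ := hvw
  have bridge : ∀ a b : Fin (m + 1), a = 0 → b ≠ 0 → (starG m).IsBridge s(a, b) := by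
    rintro a b rfl hb
    rw [isBridge_iff]
    have := not_reachable_of_cut (G := starG m \ fromEdgeSet {s(0, b)}) {b}
      (fun x y hx hxy => ?_) (v := b) (w := 0) rfl (Ne.symm ?_)
    · exact fun hr => this hr.symm
    · -- x = b, edge from b in the deleted graph: impossible
      exfalso
      simp only [Set.mem_singleton_iff] at hx; subst hx
      rw [sdiff_adj, fromEdgeSet_adj] at hxy
      obtain ⟨⟨hxy1, hxy2⟩, hxy3⟩ := hxy
      rcases hxy2 with h | h
      · exact hb h
      · subst h
        exact hxy3 ⟨by rw [Sym2.eq_swap]; rfl, hxy1⟩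
    · exact hb
  rcases h0 with rfl | rfl
  · exact bridge _ _ rfl (by rintro rfl; exact hne rfl)
  · rw [Sym2.eq_swap]; exact bridge _ _ rfl hne

lemma pathGraph_isTree (n : ℕ) : (pathGraph (n + 1)).IsTree := by
  refine ⟨pathGraph_connected n, ?_⟩
  rw [isAcyclic_iff_forall_adj_isBridge]
  intro v w hvw
  have bridge : ∀ a b : Fin (n + 1), (a : ℕ) + 1 = (b : ℕ) →
      (pathGraph (n + 1)).IsBridge s(a, b) := by
    intro a b hab
    rw [isBridge_iff]
    refine not_reachable_of_cut {x : Fin (n + 1) | (x : ℕ) ≤ (a : ℕ)}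
      (fun x y hx hxy => ?_) (by simp [Set.mem_setOf_eq]) (by simp [Set.mem_setOf_eq]; omega)
    simp only [Set.mem_setOf_eq] at hx ⊢
    rw [deleteEdges, sdiff_adj, fromEdgeSet_adj] at hxy
    obtain ⟨hxy1, hxy3⟩ := hxy
    rw [pathGraph_adj] at hxy1
    rcases hxy1 with h | h
    · by_contra hy
      push_neg at hy
      have hxa : x = a := Fin.ext (by omega)
      have hyb : y = b := Fin.ext (by omega)
      subst hxa; subst hyb
      exact hxy3 ⟨rfl, fun hh => by omega⟩
    · omega
  rw [pathGraph_adj] at hvw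
  rcases hvw with h | h
  · exact bridge _ _ h
  · rw [Sym2.eq_swap]; exact bridge _ _ h


lemma key_lemma {m : ℕ} (T : SimpleGraph (Fin m)) (hT : T.Connected) (s t : ℕ) :
    (∃ (v : Fin m) (f : Fin t → Fin m), Function.Injective f ∧ ∀ i, T.Adj v (f i)) ∨
    (∃ f : Fin s → Fin m, Function.Injective f ∧
      ∀ a b : Fin s, (a : ℕ) + 1 = (b : ℕ) → T.Adj (f a) (f b)) ∨
    m ≤ ∑ d ∈ Finset.range s, t ^ d := by
  classical
  by_cases hdeg : ∃ v : Fin m, t ≤ T.degree v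
  · left
    obtain ⟨v, hv⟩ := hdeg
    have hcard : Fintype.card (Fin t) ≤ Fintype.card (T.neighborSet v) := by
      rwa [Fintype.card_fin, T.card_neighborSet_eq_degree]
    obtain ⟨emb⟩ := Function.Embedding.nonempty_of_card_le hcard
    exact ⟨v, fun i => (emb i : Fin m), Subtype.val_injective.comp emb.injective,
      fun i => (emb i).2⟩
  push_neg at hdeg
  by_cases hpath : ∃ (u w : Fin m) (p : T.Walk u w), p.IsPath ∧ s ≤ p.length + 1
  · right; left
    obtain ⟨u, w, p, hp, hs⟩ := hpath
    have hlen : p.support.length = p.length + 1 := p.length_support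
    have hget : ∀ i : Fin s, (i : ℕ) < p.support.length := fun i => by
      rw [hlen]; exact lt_of_lt_of_le i.2 hs
    refine ⟨fun i => p.support.get ⟨i, hget i⟩, ?_, ?_⟩
    · intro a b hab
      have h2 := (List.nodup_iff_injective_get.mp hp.support_nodup) hab
      exact Fin.ext (by simpa using h2)
    · intro a b hab
      have hchain := List.isChain_iff_getElem.mp p.isChain_adj_support
      have hb := hget b
      have := hchain a (by omega)
      convert this using 2
      show p.support[(b : ℕ)] = p.support[(a : ℕ) + 1]
      congr 1
      omega
      rfl
  push_neg at hpath
  right; right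
  have hne : Nonempty (Fin m) := hT.nonempty
  obtain ⟨r⟩ := hne
  -- every vertex is at distance < s from r
  have hdist : ∀ v : Fin m, T.dist r v < s := by
    intro v
    obtain ⟨p, hp, hlen⟩ := hT.exists_path_of_dist r v
    have := hpath r v p hp
    omega
  set level : ℕ → Finset (Fin m) := fun d => univ.filter (fun v => T.dist r v = d) with hlevel
  have hparent : ∀ d (v : Fin m), T.dist r v = d + 1 →
      ∃ u, T.dist r u = d ∧ T.Adj u v := by
    intro d v hv
    obtain ⟨p, hp, hlen⟩ := hT.exists_path_of_dist r v
    rw [hv] at hlen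
    -- p has positive length, decompose as concat
    cases p with
    | nil => simp at hlen
    | cons h q =>
      obtain ⟨x, q', h', heq⟩ := SimpleGraph.Walk.exists_cons_eq_concat h q
      have hlq : q'.length = d := by
        have h3 := congrArg SimpleGraph.Walk.length heq
        rw [SimpleGraph.Walk.length_concat] at h3
        rw [h3] at hlen
        omega
      have h1 : T.dist r x ≤ d := hlq ▸ SimpleGraph.dist_le q'
      have h2 : d + 1 ≤ T.dist r x + 1 := by
        obtain ⟨w0, hw0⟩ := (hT r x).exists_walk_length_eq_dist
        have := SimpleGraph.dist_le (w0.concat h')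
        rw [SimpleGraph.Walk.length_concat, hw0] at this
        omega
      exact ⟨x, by omega, h'⟩
  have hlevelcard : ∀ d, (level d).card ≤ t ^ d := by
    intro d
    induction d with
    | zero =>
      have : level 0 ⊆ {r} := by
        intro v hv
        simp only [hlevel, mem_filter, mem_univ, true_and] at hv
        rw [Finset.mem_singleton]
        exact ((hT.dist_eq_zero_iff).mp hv).symm
      simpa using Finset.card_le_card this
    | succ d ih =>
      have hsub : level (d + 1) ⊆ (level d).biUnion (fun u => T.neighborFinset u) := by
        intro v hv
        simp only [hlevel, mem_filter, mem_univ, true_and] at hv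
        obtain ⟨u, hu, hadj⟩ := hparent d v hv
        refine Finset.mem_biUnion.mpr ⟨u, ?_, ?_⟩
        · simp [hlevel, hu]
        · rwa [mem_neighborFinset]
      calc (level (d + 1)).card ≤ ((level d).biUnion (fun u => T.neighborFinset u)).card :=
            Finset.card_le_card hsub
        _ ≤ ∑ u ∈ level d, (T.neighborFinset u).card := Finset.card_biUnion_le
        _ ≤ ∑ _u ∈ level d, t := Finset.sum_le_sum (fun u _ => by
            rw [T.card_neighborFinset_eq_degree]; exact (hdeg u).le)
        _ = (level d).card * t := by rw [Finset.sum_const, smul_eq_mul]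
        _ ≤ t ^ d * t := Nat.mul_le_mul_right t ih
        _ = t ^ (d + 1) := by ring
  have hcover : (univ : Finset (Fin m)) ⊆ (Finset.range s).biUnion level := by
    intro v _
    exact Finset.mem_biUnion.mpr ⟨T.dist r v, Finset.mem_range.mpr (hdist v), by
      simp [hlevel]⟩
  calc m = (univ : Finset (Fin m)).card := by simp
    _ ≤ ((Finset.range s).biUnion level).card := Finset.card_le_card hcover
    _ ≤ ∑ d ∈ Finset.range s, (level d).card := Finset.card_biUnion_le
    _ ≤ ∑ d ∈ Finset.range s, t ^ d := Finset.sum_le_sum (fun d _ => hlevelcard d)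


/-- F1: a long path in `T` gives a fan minor of `treeApex T j`. -/
lemma fan_isMinor_treeApex {m j s : ℕ} (T : SimpleGraph (Fin m)) (f : Fin s → Fin m)
    (hinj : Function.Injective f)
    (hadj : ∀ a b : Fin s, (a : ℕ) + 1 = (b : ℕ) → T.Adj (f a) (f b)) :
    IsMinor (fanGraph j s) (treeApex T j) := by
  refine ⟨fun u => Sum.elim (fun a => ({Sum.inr a} : Set (Fin m ⊕ Fin j)))
      (fun b => {Sum.inl (f b)}) u, ?_, ?_, ?_, ?_⟩
  · rintro (a | b) <;> exact ⟨_, rfl⟩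
  · rintro (a | b) <;> exact induce_singleton_connected _ _
  · rintro (a | b) (a' | b') h <;> simp only [Sum.elim_inl, Sum.elim_inr] <;>
      refine Set.disjoint_singleton.mpr (fun hh => h ?_)
    · rw [Sum.inr.inj hh]
    · exact absurd hh (by simp)
    · exact absurd hh (by simp)
    · rw [hinj (Sum.inl.inj hh)]
  · rintro u u' (⟨a, b, rfl, rfl⟩ | ⟨a, b, rfl, rfl⟩ | ⟨a, b, rfl, rfl, hab⟩)
    · exact ⟨Sum.inr a, rfl, Sum.inl (f b), rfl, Or.inr (Or.inr ⟨a, f b, rfl, rfl⟩)⟩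
    · exact ⟨Sum.inl (f a), rfl, Sum.inr b, rfl, Or.inr (Or.inl ⟨f a, b, rfl, rfl⟩)⟩
    · refine ⟨Sum.inl (f a), rfl, Sum.inl (f b), rfl, Or.inl ⟨f a, f b, rfl, rfl, ?_⟩⟩
      rcases hab with h | h
      · exact hadj a b h
      · exact (hadj b a h).symm

/-- F2: a high-degree vertex in `T` gives a `K_{j+1,t}` minor of `treeApex T j`. -/
lemma bip_isMinor_treeApex {m j t : ℕ} (T : SimpleGraph (Fin m)) (v : Fin m)
    (f : Fin t → Fin m) (hinj : Function.Injective f) (hadj : ∀ i, T.Adj v (f i)) :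
    IsMinor (completeBipartiteGraph (Fin (j + 1)) (Fin t)) (treeApex T j) := by
  classical
  refine ⟨fun u => Sum.elim
      (fun a : Fin (j + 1) => if h : (a : ℕ) < j then ({Sum.inr ⟨(a : ℕ), h⟩} : Set (Fin m ⊕ Fin j))
        else {Sum.inl v})
      (fun b : Fin t => ({Sum.inl (f b)} : Set (Fin m ⊕ Fin j))) u, ?_, ?_, ?_, ?_⟩
  · rintro (a | b)
    · by_cases h : (a : ℕ) < j
      · simp only [Sum.elim_inl]; rw [dif_pos h]; exact ⟨_, rfl⟩
      · simp only [Sum.elim_inl]; rw [dif_neg h]; exact ⟨_, rfl⟩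
    · exact ⟨_, rfl⟩
  · rintro (a | b)
    · by_cases h : (a : ℕ) < j
      · simp only [Sum.elim_inl]; rw [dif_pos h]; exact induce_singleton_connected _ _
      · simp only [Sum.elim_inl]; rw [dif_neg h]; exact induce_singleton_connected _ _
    · exact induce_singleton_connected _ _
  · rintro (a | b) (a' | b') h
    · simp only [Sum.elim_inl]
      by_cases h1 : (a : ℕ) < j <;> by_cases h2 : (a' : ℕ) < j <;>
        [rw [dif_pos h1, dif_pos h2]; rw [dif_pos h1, dif_neg h2];
         rw [dif_neg h1, dif_pos h2]; rw [dif_neg h1, dif_neg h2]] <;>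
        refine Set.disjoint_singleton.mpr (fun hh => ?_)
      · refine h (congrArg Sum.inl (Fin.ext ?_))
        have h3 : (⟨(a : ℕ), h1⟩ : Fin j) = ⟨(a' : ℕ), h2⟩ := Sum.inr.inj hh
        simpa using h3
      · exact absurd hh (by simp)
      · exact absurd hh (by simp)
      · refine h (congrArg Sum.inl (Fin.ext ?_))
        omega
    · simp only [Sum.elim_inl, Sum.elim_inr]
      by_cases h1 : (a : ℕ) < j <;> [rw [dif_pos h1]; rw [dif_neg h1]] <;>
        refine Set.disjoint_singleton.mpr (fun hh => ?_)
      · exact absurd hh (by simp)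
      · exact (hadj b').ne (Sum.inl.inj hh)
    · simp only [Sum.elim_inl, Sum.elim_inr]
      by_cases h1 : (a' : ℕ) < j <;> [rw [dif_pos h1]; rw [dif_neg h1]] <;>
        refine Set.disjoint_singleton.mpr (fun hh => ?_)
      · exact absurd hh (by simp)
      · exact (hadj b).ne' (Sum.inl.inj hh)
    · simp only [Sum.elim_inr]
      exact Set.disjoint_singleton.mpr (fun hh => h (congrArg Sum.inr (hinj (Sum.inl.inj hh))))
  · rintro (a | b) (a' | b') hu <;>
      simp only [completeBipartiteGraph, Sum.isLeft_inl, Sum.isRight_inl, Sum.isLeft_inr,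
        Sum.isRight_inr, and_true, true_and, and_false, false_and, or_false, false_or] at hu
    · exact absurd hu (by simp)
    · simp only [Sum.elim_inl, Sum.elim_inr]
      by_cases h1 : (a : ℕ) < j
      · exact ⟨Sum.inr ⟨(a : ℕ), h1⟩, by rw [dif_pos h1]; rfl, Sum.inl (f b'), rfl,
          Or.inr (Or.inr ⟨_, _, rfl, rfl⟩)⟩
      · exact ⟨Sum.inl v, by rw [dif_neg h1]; rfl, Sum.inl (f b'), rfl,
          Or.inl ⟨_, _, rfl, rfl, hadj b'⟩⟩
    · simp only [Sum.elim_inl, Sum.elim_inr]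
      by_cases h1 : (a' : ℕ) < j
      · exact ⟨Sum.inl (f b), rfl, Sum.inr ⟨(a' : ℕ), h1⟩, by rw [dif_pos h1]; rfl,
          Or.inr (Or.inl ⟨_, _, rfl, rfl⟩)⟩
      · exact ⟨Sum.inl (f b), rfl, Sum.inl v, by rw [dif_neg h1]; rfl,
          Or.inl ⟨_, _, rfl, rfl, (hadj b).symm⟩⟩
    · exact absurd hu (by simp)

/-- F3: `treeApex` of a path is a minor of (in fact isomorphic to) the fan. -/
lemma treeApex_path_isMinor_fan {j s : ℕ} :
    IsMinor (treeApex (SimpleGraph.pathGraph s) j) (fanGraph j s) := by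
  refine ⟨fun u => Sum.elim (fun a => ({Sum.inr a} : Set (Fin j ⊕ Fin s)))
      (fun b => {Sum.inl b}) u, ?_, ?_, ?_, ?_⟩
  · rintro (a | b) <;> exact ⟨_, rfl⟩
  · rintro (a | b) <;> exact induce_singleton_connected _ _
  · rintro (a | b) (a' | b') h <;> simp only [Sum.elim_inl, Sum.elim_inr] <;>
      refine Set.disjoint_singleton.mpr (fun hh => h ?_)
    · rw [Sum.inr.inj hh]
    · exact absurd hh (by simp)
    · exact absurd hh (by simp)
    · rw [Sum.inl.inj hh]
  · rintro u u' (⟨a, b, rfl, rfl, hab⟩ | ⟨a, b, rfl, rfl⟩ | ⟨a, b, rfl, rfl⟩)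
    · exact ⟨Sum.inr a, rfl, Sum.inr b, rfl,
        Or.inr (Or.inr ⟨a, b, rfl, rfl, SimpleGraph.pathGraph_adj.mp hab⟩)⟩
    · exact ⟨Sum.inr a, rfl, Sum.inl b, rfl, Or.inr (Or.inl ⟨a, b, rfl, rfl⟩)⟩
    · exact ⟨Sum.inl a, rfl, Sum.inr b, rfl, Or.inl ⟨a, b, rfl, rfl⟩⟩

/-- F4: `treeApex` of a star is a minor of a complete bipartite graph. -/
lemma treeApex_star_isMinor_bip {j N : ℕ} :
    IsMinor (treeApex (starG (N + 1)) j)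
      (completeBipartiteGraph (Fin (j + 1)) (Fin (N + 1 + j))) := by
  classical
  refine ⟨fun u => Sum.elim
      (fun a : Fin (N + 2) => if a = 0
        then ({Sum.inl ⟨j, Nat.lt_succ_self j⟩} : Set (Fin (j + 1) ⊕ Fin (N + 1 + j)))
        else {Sum.inr ⟨(a : ℕ) - 1, by have := a.2; omega⟩})
      (fun i : Fin j => ({Sum.inl ⟨(i : ℕ), by have := i.2; omega⟩,
        Sum.inr ⟨N + 1 + (i : ℕ), by have := i.2; omega⟩} :
          Set (Fin (j + 1) ⊕ Fin (N + 1 + j)))) u, ?_, ?_, ?_, ?_⟩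
  · rintro (a | i)
    · by_cases h : a = 0
      · simp only [Sum.elim_inl]; rw [if_pos h]; exact ⟨_, rfl⟩
      · simp only [Sum.elim_inl]; rw [if_neg h]; exact ⟨_, rfl⟩
    · exact ⟨_, Or.inl rfl⟩
  · rintro (a | i)
    · by_cases h : a = 0
      · simp only [Sum.elim_inl]; rw [if_pos h]; exact induce_singleton_connected _ _
      · simp only [Sum.elim_inl]; rw [if_neg h]; exact induce_singleton_connected _ _
    · simp only [Sum.elim_inr]
      exact induce_pair_connected (Or.inl ⟨rfl, rfl⟩)
  · have val_pos : ∀ a : Fin (N + 2), a ≠ 0 → 1 ≤ (a : ℕ) := fun a ha =>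
      Nat.one_le_iff_ne_zero.mpr (fun hh => ha (Fin.ext (by rw [hh, Fin.val_zero])))
    rintro (a | i) (a' | i') h
    · simp only [Sum.elim_inl]
      by_cases h1 : a = 0 <;> by_cases h2 : a' = 0 <;>
        [skip; rw [if_pos h1, if_neg h2]; rw [if_neg h1, if_pos h2]; rw [if_neg h1, if_neg h2]]
      · exact absurd (h1.trans h2.symm) (fun hh => h (congrArg Sum.inl hh))
      · exact Set.disjoint_singleton.mpr (by simp)
      · exact Set.disjoint_singleton.mpr (by simp)
      · refine Set.disjoint_singleton.mpr (fun hh => ?_)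
        have h3 := Sum.inr.inj hh
        have h4 : (a : ℕ) - 1 = (a' : ℕ) - 1 := by simpa using h3
        have := val_pos a h1
        have := val_pos a' h2
        exact h (congrArg Sum.inl (Fin.ext (by omega)))
    · simp only [Sum.elim_inl, Sum.elim_inr]
      refine Set.disjoint_left.mpr ?_
      intro x hx hx'
      by_cases h1 : a = 0
      · rw [if_pos h1] at hx
        rcases hx' with rfl | rfl
        · rw [Set.mem_singleton_iff] at hx
          have h3 := Sum.inl.inj hx
          rw [Fin.mk.injEq] at h3
          have h4 := i'.2
          omega
        · exact absurd hx (by simp)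
      · rw [if_neg h1] at hx
        rcases hx' with rfl | rfl
        · exact absurd hx (by simp)
        · rw [Set.mem_singleton_iff] at hx
          have h3 := Sum.inr.inj hx
          rw [Fin.mk.injEq] at h3
          have h4 := a.2
          omega
    · simp only [Sum.elim_inl, Sum.elim_inr]
      refine Set.disjoint_left.mpr ?_
      intro x hx hx'
      by_cases h1 : a' = 0
      · rw [if_pos h1] at hx'
        rw [Set.mem_singleton_iff] at hx'; subst hx'
        rcases hx with hx | hx
        · have h3 := Sum.inl.inj hx
          rw [Fin.mk.injEq] at h3
          have h4 := i.2
          omega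
        · exact absurd hx (by simp)
      · rw [if_neg h1] at hx'
        rw [Set.mem_singleton_iff] at hx'; subst hx'
        rcases hx with hx | hx
        · exact absurd hx (by simp)
        · have h3 := Sum.inr.inj hx
          rw [Fin.mk.injEq] at h3
          have h4 := a'.2
          omega
    · simp only [Sum.elim_inr]
      have hne : (i : ℕ) ≠ (i' : ℕ) := fun hh => h (congrArg Sum.inr (Fin.ext hh))
      refine Set.disjoint_left.mpr ?_
      rintro x (rfl | rfl) (hx' | hx')
      · have h3 := Sum.inl.inj hx'
        rw [Fin.mk.injEq] at h3
        omega
      · exact absurd hx' (by simp)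
      · exact absurd hx' (by simp)
      · have h3 := Sum.inr.inj hx'
        rw [Fin.mk.injEq] at h3
        omega
  · rintro u u' (⟨a, b, rfl, rfl, hab⟩ | ⟨a, i, rfl, rfl⟩ | ⟨i, a, rfl, rfl⟩)
    · obtain ⟨hne, h0⟩ := hab
      rcases h0 with rfl | rfl
      · have hb : b ≠ 0 := Ne.symm hne
        refine ⟨Sum.inl ⟨j, Nat.lt_succ_self j⟩, ?_, Sum.inr ⟨(b : ℕ) - 1, by have := b.2; omega⟩, ?_, ?_⟩
        · simp only [Sum.elim_inl]; simp
        · simp only [Sum.elim_inl]; rw [if_neg hb]; rfl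
        · exact Or.inl ⟨rfl, rfl⟩
      · have ha : a ≠ 0 := hne
        refine ⟨Sum.inr ⟨(a : ℕ) - 1, by have := a.2; omega⟩, ?_, Sum.inl ⟨j, Nat.lt_succ_self j⟩, ?_, ?_⟩
        · simp only [Sum.elim_inl]; rw [if_neg ha]; rfl
        · simp only [Sum.elim_inl]; simp
        · exact Or.inr ⟨rfl, rfl⟩
    · by_cases h1 : a = 0
      · subst h1
        refine ⟨Sum.inl ⟨j, Nat.lt_succ_self j⟩, ?_, Sum.inr ⟨N + 1 + (i : ℕ), by have := i.2; omega⟩, ?_, ?_⟩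
        · simp only [Sum.elim_inl]; simp
        · exact Or.inr rfl
        · exact Or.inl ⟨rfl, rfl⟩
      · refine ⟨Sum.inr ⟨(a : ℕ) - 1, by have := a.2; omega⟩, ?_, Sum.inl ⟨(i : ℕ), by have := i.2; omega⟩, ?_, ?_⟩
        · simp only [Sum.elim_inl]; rw [if_neg h1]; rfl
        · exact Or.inl rfl
        · exact Or.inr ⟨rfl, rfl⟩
    · by_cases h1 : a = 0
      · subst h1
        refine ⟨Sum.inr ⟨N + 1 + (i : ℕ), by have := i.2; omega⟩, Or.inr rfl, Sum.inl ⟨j, Nat.lt_succ_self j⟩, ?_, ?_⟩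
        · simp only [Sum.elim_inl]; simp
        · exact Or.inr ⟨rfl, rfl⟩
      · refine ⟨Sum.inl ⟨(i : ℕ), by have := i.2; omega⟩, Or.inl rfl, Sum.inr ⟨(a : ℕ) - 1, by have := a.2; omega⟩, ?_, ?_⟩
        · simp only [Sum.elim_inl]; rw [if_neg h1]; rfl
        · exact Or.inl ⟨rfl, rfl⟩


open SimpleGraph in
/-- For a minor-closed class `A`, the apex width of order `j` of `A` is finite
iff some `j`-fan and some `K_{j+1,t}` are not in `A`. -/
theorem apex_width_finite_iff (A : ∀ n : ℕ, Set (SimpleGraph (Fin n))) (j : ℕ)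
    (hj : 1 ≤ j)
    (hminor : ∀ (n m : ℕ) (G : SimpleGraph (Fin n)) (H : SimpleGraph (Fin m)),
      G ∈ A n → IsMinor H G → H ∈ A m) :
    (∃ N : ℕ, ∀ (n : ℕ), ∀ G ∈ A n, ∀ (m' : ℕ) (T : SimpleGraph (Fin m')),
        T.IsTree → IsMinor (treeApex T j) G → m' ≤ N) ↔
      ((∃ s, ¬ MemClass A (fanGraph j s)) ∧
        (∃ t, ¬ MemClass A (completeBipartiteGraph (Fin (j + 1)) (Fin t)))) := by
  constructor
  · rintro ⟨N, hN⟩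
    constructor
    · refine ⟨N + 1, fun hmem => ?_⟩
      obtain ⟨n, H, hH, ⟨e⟩⟩ := hmem
      have h1 : IsMinor (treeApex (SimpleGraph.pathGraph (N + 1)) j) H :=
        (treeApex_path_isMinor_fan).of_iso_right e
      have := hN n H hH (N + 1) _ (pathGraph_isTree N) h1
      omega
    · refine ⟨N + 1 + j, fun hmem => ?_⟩
      obtain ⟨n, H, hH, ⟨e⟩⟩ := hmem
      have h1 : IsMinor (treeApex (starG (N + 1)) j) H :=
        (treeApex_star_isMinor_bip).of_iso_right e
      have := hN n H hH (N + 2) _ (starG_isTree (N + 1)) h1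
      omega
  · rintro ⟨⟨s, hs⟩, t, ht⟩
    refine ⟨∑ d ∈ Finset.range s, t ^ d, ?_⟩
    intro n G hG m' T hTree hMin
    by_contra hm'
    push_neg at hm'
    have isoTA := SimpleGraph.Iso.comap
      ((finSumFinEquiv : Fin m' ⊕ Fin j ≃ Fin (m' + j))).symm (treeApex T j)
    have hTA : IsMinor ((treeApex T j).comap
        ((finSumFinEquiv : Fin m' ⊕ Fin j ≃ Fin (m' + j))).symm.toEmbedding) G :=
      hMin.of_iso_left isoTA.symm
    have hTAmem := hminor n (m' + j) G _ hG hTA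
    rcases key_lemma T hTree.isConnected s t with ⟨v, f, hfi, hfa⟩ | ⟨f, hfi, hfa⟩ | hbound
    · have isoK := SimpleGraph.Iso.comap
        ((finSumFinEquiv : Fin (j + 1) ⊕ Fin t ≃ Fin (j + 1 + t))).symm
        (completeBipartiteGraph (Fin (j + 1)) (Fin t))
      have h2 : IsMinor (completeBipartiteGraph (Fin (j + 1)) (Fin t)) (treeApex T j) :=
        bip_isMinor_treeApex T v f hfi hfa
      have h3 := (h2.of_iso_left isoK.symm).of_iso_right isoTA.symm
      exact ht ⟨j + 1 + t, _, hminor (m' + j) (j + 1 + t) _ _ hTAmem h3, ⟨isoK.symm⟩⟩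
    · have isoF := SimpleGraph.Iso.comap
        ((finSumFinEquiv : Fin j ⊕ Fin s ≃ Fin (j + s))).symm (fanGraph j s)
      have h2 : IsMinor (fanGraph j s) (treeApex T j) :=
        fan_isMinor_treeApex T f hfi hfa
      have h3 := (h2.of_iso_left isoF.symm).of_iso_right isoTA.symm
      exact hs ⟨j + s, _, hminor (m' + j) (j + s) _ _ hTAmem h3, ⟨isoF.symm⟩⟩
    · omega
end

section
/- Let $G$ be a parallel SP-network with source $s$ and sink $t$. Then for every internal vertex $v$ of $G$ there exist two internally disjoint paths from $s$ to $t$ such that one of the paths contains $v$. -/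
section Helpers
open SimpleGraph Walk

variable {V : Type*} [DecidableEq V] {G G' : SimpleGraph V} {a b c x y u v w s t : V}

/-- Appending two paths whose supports meet only at the junction is a path. -/
lemma appendPath {p : G.Walk a b} {q : G.Walk b c} (hp : p.IsPath) (hq : q.IsPath)
    (h : ∀ u ∈ p.support, u ∈ q.support → u = b) : (p.append q).IsPath := by
  rw [Walk.isPath_def, Walk.support_append]
  refine List.Nodup.append hp.support_nodup (hq.support_nodup.sublist (List.tail_sublist _)) ?_
  intro u hu hu'
  have hb : u = b := h u hu (List.mem_of_mem_tail hu')
  subst hb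
  have := hq.support_nodup
  rw [q.support_eq_cons] at this
  exact (List.nodup_cons.mp this).1 hu'

/-- A vertex in both halves of a `takeUntil`/`dropUntil` split of a path is the split vertex. -/
lemma mem_take_drop {p : G.Walk a b} (hp : p.IsPath) (hx : x ∈ p.support)
    (h1 : u ∈ (p.takeUntil x hx).support) (h2 : u ∈ (p.dropUntil x hx).support) : u = x := by
  by_contra hne
  have hspec := p.take_spec hx
  have hnd : ((p.takeUntil x hx).append (p.dropUntil x hx)).IsPath := by rwa [hspec]
  rw [Walk.isPath_def, Walk.support_append] at hnd
  have h2' : u ∈ (p.dropUntil x hx).support.tail := by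
    rw [(p.dropUntil x hx).support_eq_cons, List.mem_cons] at h2
    rcases h2 with h2 | h2
    · exact absurd h2 hne
    · exact h2
  exact (List.disjoint_of_nodup_append hnd) h1 h2'

lemma start_mem_drop {p : G.Walk a b} (hp : p.IsPath) (hx : x ∈ p.support)
    (h : a ∈ (p.dropUntil x hx).support) : a = x :=
  mem_take_drop hp hx (p.takeUntil x hx).start_mem_support h

lemma end_mem_take {p : G.Walk a b} (hp : p.IsPath) (hx : x ∈ p.support)
    (h : b ∈ (p.takeUntil x hx).support) : b = x :=
  mem_take_drop hp hx h (p.dropUntil x hx).end_mem_support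

/-- `dropUntil` at the start vertex is the whole walk. -/
lemma dropUntil_start (p : G.Walk a b) (h : a ∈ p.support) : p.dropUntil a h = p := by
  have hc := p.count_support_takeUntil_eq_one h
  have hnil : (p.takeUntil a h).Nil := by
    cases hq : (p.takeUntil a h) with
    | nil => simp
    | cons hadj q =>
      exfalso
      rw [hq] at hc
      simp only [Walk.support_cons, List.count_cons, beq_self_eq_true, if_true] at hc
      have h1 : 1 ≤ List.count a q.support := List.one_le_count_iff.mpr q.end_mem_support
      omega
  have := p.take_spec h
  rw [Walk.nil_iff_eq_nil.mp hnil, Walk.nil_append] at this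
  exact this

/-- Order dichotomy on a walk. -/
lemma mem_dropUntil_or (p : G.Walk a b) (hx : x ∈ p.support) (hy : y ∈ p.support) :
    y ∈ (p.dropUntil x hx).support ∨ x ∈ (p.dropUntil y hy).support := by
  induction p with
  | nil =>
    rw [Walk.mem_support_nil_iff] at hx hy
    subst hx; subst hy
    exact Or.inl (Walk.start_mem_support _)
  | @cons a' c' b' hadj q ih =>
    by_cases hax : a' = x
    · subst hax
      rw [dropUntil_start]
      exact Or.inl hy
    · by_cases hay : a' = y
      · subst hay
        rw [dropUntil_start]
        exact Or.inr hx
      · have hx' : x ∈ q.support := by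
          have h2 := hx
          rw [Walk.support_cons, List.mem_cons] at h2
          exact h2.resolve_left fun h3 => hax h3.symm
        have hy' : y ∈ q.support := by
          have h2 := hy
          rw [Walk.support_cons, List.mem_cons] at h2
          exact h2.resolve_left fun h3 => hay h3.symm
        have e1 : (Walk.cons hadj q).dropUntil x hx = q.dropUntil x hx' := by
          simp [Walk.dropUntil, hax]
        have e2 : (Walk.cons hadj q).dropUntil y hy = q.dropUntil y hy' := by
          simp [Walk.dropUntil, hay]
        rw [e1, e2]
        exact ih hx' hy'

/-- First vertex of a walk (from the start) lying in `S`. -/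
lemma firstHit (w : G.Walk a b) (S : Set V) (hb : b ∈ S) (ha : a ∉ S) :
    ∃ (z : V) (w' : G.Walk a z), z ∈ S ∧ (∀ u ∈ w'.support, u ∈ w.support) ∧
      (∀ u ∈ w'.support, u ∈ S → u = z) := by
  induction w with
  | nil => exact absurd hb ha
  | @cons a c b hadj q ih =>
    by_cases hc : c ∈ S
    · refine ⟨c, Walk.cons hadj Walk.nil, hc, ?_, ?_⟩
      · intro u hu
        simp only [Walk.support_cons, Walk.support_nil, List.mem_cons,
          List.not_mem_nil, or_false] at hu
        rcases hu with rfl | rfl <;> simp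
      · intro u hu huS
        simp only [Walk.support_cons, Walk.support_nil, List.mem_cons, List.mem_singleton] at hu
        rcases hu with rfl | rfl | h
        · exact absurd huS ha
        · rfl
        · exact absurd h List.not_mem_nil
    · obtain ⟨z, w', hz, hsub, hfirst⟩ := ih hb hc
      refine ⟨z, Walk.cons hadj w', hz, ?_, ?_⟩
      · intro u hu
        rw [Walk.support_cons, List.mem_cons] at hu ⊢
        exact hu.imp id fun h => hsub u h
      · intro u hu huS
        rw [Walk.support_cons, List.mem_cons] at hu
        rcases hu with rfl | h
        · exact absurd huS ha
        · exact hfirst u h huS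

/-- From 2-connectivity: a path between two vertices avoiding a third. -/
lemma avoidPath {W : Type*} [Fintype W] {H : SimpleGraph W}
    (h2c : 3 ≤ Fintype.card W ∧ H.Connected ∧
      ∀ v : W, (((⊤ : H.Subgraph).deleteVerts {v}).coe.Connected)) (x u v : W)
    (hu : u ≠ x) (hv : v ≠ x) : ∃ w : H.Walk u v, x ∉ w.support := by
  have hconn := h2c.2.2 x
  have hu' : u ∈ ((⊤ : H.Subgraph).deleteVerts {x}).verts := by simp [hu]
  have hv' : v ∈ ((⊤ : H.Subgraph).deleteVerts {x}).verts := by simp [hv]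
  obtain ⟨p⟩ := hconn ⟨u, hu'⟩ ⟨v, hv'⟩
  refine ⟨(p.map (SimpleGraph.Subgraph.hom _)).copy rfl rfl, ?_⟩
  intro hx
  replace hx : x ∈ (p.map (SimpleGraph.Subgraph.hom _)).support := hx
  rw [Walk.support_map, List.mem_map] at hx
  obtain ⟨⟨y, hy⟩, _, h⟩ := hx
  have hyx : y = x := h
  subst hyx
  simp at hy

/-- Reachability inside an induced subgraph along a walk whose support stays in the set. -/
lemma reach_induce {S : Set V} :
    ∀ {a b : V} (w : G.Walk a b) (_ : ∀ u ∈ w.support, u ∈ S) (ha : a ∈ S) (hb : b ∈ S),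
      (G.induce S).Reachable ⟨a, ha⟩ ⟨b, hb⟩ := by
  intro a b w
  induction w with
  | nil => intro _ ha hb; rfl
  | @cons a c b hadj q ih =>
    intro hsub ha hb
    have hc : c ∈ S := hsub c (by simp)
    have h1 : (G.induce S).Adj ⟨a, ha⟩ ⟨c, hc⟩ := hadj
    exact (h1.reachable).trans (ih (fun u hu => hsub u (by simp [hu])) hc hb)

/-- Induced subgraph connected if everything joins a base vertex by walks inside the set. -/
lemma induce_connected_of_base {S : Set V} (x : V) (hx : x ∈ S)
    (h : ∀ w ∈ S, ∃ l : G.Walk w x, ∀ u ∈ l.support, u ∈ S) : (G.induce S).Connected := by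
  rw [SimpleGraph.connected_iff_exists_forall_reachable]
  refine ⟨⟨x, hx⟩, ?_⟩
  rintro ⟨w, hw⟩
  obtain ⟨l, hl⟩ := h w hw
  exact (reach_induce l hl hw hx).symm

/-- A segment of a path between two internal vertices avoids both endpoints. -/
lemma segPath {R : G.Walk a b} (hR : R.IsPath) (hw : w ∈ R.support) (hy : y ∈ R.support)
    (hwa : w ≠ a) (hwb : w ≠ b) (hya : y ≠ a) (hyb : y ≠ b) :
    ∃ seg : G.Walk w y, ∀ u ∈ seg.support, u ∈ R.support ∧ u ≠ a ∧ u ≠ b := by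
  have key : ∀ (w y : V) (hw : w ∈ R.support) (hy : y ∈ R.support), w ≠ a → w ≠ b → y ≠ a →
      y ≠ b → y ∈ (R.dropUntil w hw).support →
      ∃ seg : G.Walk w y, ∀ u ∈ seg.support, u ∈ R.support ∧ u ≠ a ∧ u ≠ b := by
    intro w y hw hy hwa hwb hya hyb hd
    have hDpath : (R.dropUntil w hw).IsPath := hR.dropUntil hw
    refine ⟨(R.dropUntil w hw).takeUntil y hd, ?_⟩
    intro u hu
    have hu1 : u ∈ (R.dropUntil w hw).support := (R.dropUntil w hw).support_takeUntil_subset hd hu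
    have hu2 : u ∈ R.support := R.support_dropUntil_subset hw hu1
    refine ⟨hu2, ?_, ?_⟩
    · rintro rfl
      exact hwa (start_mem_drop hR hw hu1).symm
    · intro hub
      exact hyb (end_mem_take hDpath hd (hub ▸ hu)).symm
  rcases mem_dropUntil_or R hw hy with hd | hd
  · exact key w y hw hy hwa hwb hya hyb hd
  · obtain ⟨seg, hseg⟩ := key y w hy hw hya hyb hwa hwb hd
    exact ⟨seg.reverse, by intro u hu; exact hseg u (by rwa [Walk.support_reverse, List.mem_reverse] at hu)⟩

/-- A neighbor of the start inside a path that has an internal vertex is internal. -/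
lemma exists_int_neighbor {P : G.Walk s t} (hP : P.IsPath) (hx : x ∈ P.support)
    (hxs : x ≠ s) (hxt : x ≠ t) :
    ∃ a, G.Adj s a ∧ a ∈ P.support ∧ a ≠ s ∧ a ≠ t := by
  cases P with
  | nil =>
    rw [Walk.mem_support_nil_iff] at hx
    exact absurd hx hxs
  | @cons _ c _ hadj q =>
    by_cases hct : c = t
    · subst hct
      have hq : q = Walk.nil := Walk.isPath_iff_eq_nil.mp hP.of_cons
      subst hq
      rw [Walk.support_cons, Walk.support_nil, List.mem_cons, List.mem_singleton] at hx
      rcases hx with rfl | rfl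
      · exact absurd rfl hxs
      · exact absurd rfl hxt
    · exact ⟨c, hadj, by simp, fun h => hadj.ne h.symm, hct⟩

/-- Any walk with distinct endpoints contains a neighbor of its end. -/
lemma exists_neighbor_end (w : G.Walk a c) (h : a ≠ c) :
    ∃ b, G.Adj b c ∧ b ∈ w.support ∧ b ≠ c := by
  cases hw : w.reverse with
  | nil => exact absurd rfl h
  | @cons _ d _ hadj q =>
    refine ⟨d, hadj.symm, ?_, hadj.ne'⟩
    have : d ∈ w.reverse.support := by rw [hw]; simp
    rwa [Walk.support_reverse, List.mem_reverse] at this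

/-- Step: extend internally disjoint `s`–`w` paths by the edge `w`–`t`, when `t` is on `P1`. -/
lemma stepT {P1 P2 : G.Walk s w} (hP1 : P1.IsPath) (hP2 : P2.IsPath)
    (hI : {x | x ∈ P1.support} ∩ {x | x ∈ P2.support} = ({s, w} : Set V))
    (hadj : G.Adj w t) (hts : t ≠ s) (htw : t ≠ w) (ht1 : t ∈ P1.support) :
    ∃ p q : G.Walk s t, p.IsPath ∧ q.IsPath ∧
      {x | x ∈ p.support} ∩ {x | x ∈ q.support} = ({s, t} : Set V) := by
  have hmem : ∀ u, u ∈ P1.support → u ∈ P2.support → u ∈ ({s, w} : Set V) := by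
    intro u h1 h2
    exact hI ▸ (⟨h1, h2⟩ : u ∈ {x | x ∈ P1.support} ∩ {x | x ∈ P2.support})
  refine ⟨P1.takeUntil t ht1, P2.append (Walk.cons hadj Walk.nil), hP1.takeUntil ht1, ?_, ?_⟩
  · refine appendPath hP2 (by simp [Walk.cons_isPath_iff, htw.symm]) ?_
    intro u hu2 hue
    simp only [Walk.support_cons, Walk.support_nil, List.mem_cons, List.mem_singleton] at hue
    rcases hue with rfl | rfl | h
    · rfl
    · rcases hmem u ht1 hu2 with h | h
      · exact absurd h hts
      · exact absurd h htw
    · exact absurd h List.not_mem_nil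
  · ext u
    simp only [Set.mem_inter_iff, Set.mem_setOf_eq, Set.mem_insert_iff, Set.mem_singleton_iff]
    constructor
    · rintro ⟨hup, huq⟩
      rw [Walk.mem_support_append_iff] at huq
      have hup1 : u ∈ P1.support := P1.support_takeUntil_subset ht1 hup
      rcases huq with huq | huq
      · rcases hmem u hup1 huq with h | h
        · exact Or.inl h
        · subst h
          exact absurd (end_mem_take hP1 ht1 hup) htw.symm
      · simp only [Walk.support_cons, Walk.support_nil, List.mem_cons, List.mem_singleton] at huq
        rcases huq with rfl | rfl | h
        · exact absurd (end_mem_take hP1 ht1 hup) htw.symm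
        · exact Or.inr rfl
        · exact absurd h List.not_mem_nil
    · rintro (rfl | rfl)
      · refine ⟨Walk.start_mem_support _, ?_⟩
        rw [Walk.mem_support_append_iff]
        exact Or.inl (Walk.start_mem_support _)
      · refine ⟨Walk.end_mem_support _, ?_⟩
        rw [Walk.mem_support_append_iff]
        exact Or.inr (Walk.end_mem_support _)

/-- Step: `t` off the cycle; reroute along the connector `T'` landing at `z ∈ P1`. -/
lemma stepZ {P1 P2 : G.Walk s w} (hP1 : P1.IsPath) (hP2 : P2.IsPath)
    (hI : {x | x ∈ P1.support} ∩ {x | x ∈ P2.support} = ({s, w} : Set V))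
    (hadj : G.Adj w t) (hts : t ≠ s) (htw : t ≠ w)
    (ht1 : t ∉ P1.support) (ht2 : t ∉ P2.support)
    {z : V} (hz1 : z ∈ P1.support) (hzw : z ≠ w)
    {T' : G.Walk t z} (hT' : T'.IsPath)
    (hT'C : ∀ u ∈ T'.support, (u ∈ P1.support ∨ u ∈ P2.support) → u = z)
    (hT'w : w ∉ T'.support) :
    ∃ p q : G.Walk s t, p.IsPath ∧ q.IsPath ∧
      {x | x ∈ p.support} ∩ {x | x ∈ q.support} = ({s, t} : Set V) := by
  have hmem : ∀ u, u ∈ P1.support → u ∈ P2.support → u ∈ ({s, w} : Set V) := by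
    intro u h1 h2
    exact hI ▸ (⟨h1, h2⟩ : u ∈ {x | x ∈ P1.support} ∩ {x | x ∈ P2.support})
  have hzs' : ∀ u, u ∈ T'.reverse.support → u ∈ T'.support := by
    intro u hu; rwa [Walk.support_reverse, List.mem_reverse] at hu
  refine ⟨(P1.takeUntil z hz1).append T'.reverse, P2.append (Walk.cons hadj Walk.nil), ?_, ?_, ?_⟩
  · refine appendPath (hP1.takeUntil hz1) hT'.reverse ?_
    intro u hu hur
    exact hT'C u (hzs' u hur) (Or.inl (P1.support_takeUntil_subset hz1 hu))
  · refine appendPath hP2 (by simp [Walk.cons_isPath_iff, htw.symm]) ?_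
    intro u hu2 hue
    simp only [Walk.support_cons, Walk.support_nil, List.mem_cons, List.mem_singleton] at hue
    rcases hue with rfl | rfl | h
    · rfl
    · exact absurd hu2 ht2
    · exact absurd h List.not_mem_nil
  · ext u
    simp only [Set.mem_inter_iff, Set.mem_setOf_eq, Set.mem_insert_iff, Set.mem_singleton_iff]
    constructor
    · rintro ⟨hup, huq⟩
      rw [Walk.mem_support_append_iff] at hup huq
      have huq' : u ∈ P2.support ∨ (u = w ∨ u = t) := by
        rcases huq with h | h
        · exact Or.inl h
        · simp only [Walk.support_cons, Walk.support_nil, List.mem_cons,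
            List.mem_singleton] at h
          rcases h with rfl | rfl | h
          · exact Or.inr (Or.inl rfl)
          · exact Or.inr (Or.inr rfl)
          · exact absurd h List.not_mem_nil
      rcases hup with hup | hup
      · -- u on the initial segment of P1
        have hup1 : u ∈ P1.support := P1.support_takeUntil_subset hz1 hup
        rcases huq' with h2 | h2 | h2
        · rcases hmem u hup1 h2 with h | h
          · exact Or.inl h
          · subst h
            exact absurd (end_mem_take hP1 hz1 hup) hzw.symm
        · subst h2
          exact absurd (end_mem_take hP1 hz1 hup) hzw.symm
        · exact absurd (h2 ▸ hup1) ht1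
      · -- u on T'
        have hut : u ∈ T'.support := hzs' u hup
        rcases huq' with h2 | h2 | h2
        · have hz2 : u = z := hT'C u hut (Or.inr h2)
          subst hz2
          rcases hmem u hz1 h2 with h | h
          · exact Or.inl h
          · exact absurd h hzw
        · exact absurd (h2 ▸ hut) hT'w
        · exact Or.inr h2
    · rintro (rfl | rfl)
      · refine ⟨?_, ?_⟩ <;> rw [Walk.mem_support_append_iff]
        · exact Or.inl (Walk.start_mem_support _)
        · exact Or.inl (Walk.start_mem_support _)
      · refine ⟨?_, ?_⟩ <;> rw [Walk.mem_support_append_iff]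
        · refine Or.inr ?_
          rw [Walk.support_reverse, List.mem_reverse]
          exact Walk.start_mem_support _
        · exact Or.inr (by simp)

/-- Any two distinct vertices of a 2-connected graph are joined by two
internally disjoint paths. -/
lemma twoPaths [Fintype V]
    (h2c : 3 ≤ Fintype.card V ∧ G.Connected ∧
      ∀ v : V, (((⊤ : G.Subgraph).deleteVerts {v}).coe.Connected)) :
    ∀ s t : V, s ≠ t → ∃ p q : G.Walk s t, p.IsPath ∧ q.IsPath ∧
      {x | x ∈ p.support} ∩ {x | x ∈ q.support} = ({s, t} : Set V) := by
  have hconn := h2c.2.1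
  suffices H : ∀ n (s t : V), s ≠ t → G.dist s t ≤ n → ∃ p q : G.Walk s t, p.IsPath ∧ q.IsPath ∧
      {x | x ∈ p.support} ∩ {x | x ∈ q.support} = ({s, t} : Set V) by
    intro s t hst
    exact H (G.dist s t) s t hst le_rfl
  intro n
  induction n with
  | zero =>
    intro s t hst hd
    have := hconn.pos_dist_of_ne hst; omega
  | succ n ih =>
    intro s t hst hd
    by_cases hdn : G.dist s t ≤ n
    · exact ih s t hst hdn
    have hdist : G.dist s t = n + 1 := le_antisymm hd (by omega)
    cases n with
    | zero =>
      have hadj : G.Adj s t := SimpleGraph.dist_eq_one_iff_adj.mp hdist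
      refine ⟨Walk.cons hadj Walk.nil, Walk.cons hadj Walk.nil, ?_, ?_, ?_⟩
      · simp [Walk.cons_isPath_iff, hst]
      · simp [Walk.cons_isPath_iff, hst]
      · ext u
        simp only [Set.mem_inter_iff, Set.mem_setOf_eq, Walk.support_cons, Walk.support_nil,
          List.mem_cons, List.mem_singleton, Set.mem_insert_iff, Set.mem_singleton_iff]
        tauto
    | succ m =>
      obtain ⟨W, hWlen⟩ := hconn.exists_walk_length_eq_dist s t
      rw [hdist] at hWlen
      cases hrev : W.reverse with
      | nil =>
        exfalso
        have := congrArg Walk.length hrev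
        rw [Walk.length_reverse, hWlen] at this
        simp at this
      | @cons _ w _ hadj q =>
        have hqlen : q.length = m + 1 := by
          have := congrArg Walk.length hrev
          rw [Walk.length_reverse, hWlen, Walk.length_cons] at this
          omega
        have hwt : w ≠ t := hadj.ne'
        have hdsw_le : G.dist s w ≤ m + 1 := by
          have := G.dist_le q.reverse
          rwa [Walk.length_reverse, hqlen] at this
        have hdsw_ge : m + 1 ≤ G.dist s w := by
          have h1 : G.dist s t ≤ G.dist s w + G.dist w t :=
            hconn.dist_triangle
          have h2 : G.dist w t ≤ 1 := by
            have := G.dist_le (Walk.cons hadj.symm Walk.nil)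
            simpa using this
          omega
        have hdsw : G.dist s w = m + 1 := le_antisymm hdsw_le hdsw_ge
        have hsw : s ≠ w := by
          intro h
          rw [← h, SimpleGraph.dist_self] at hdsw
          omega
        obtain ⟨P1, P2, hP1, hP2, hI⟩ := ih s w hsw (le_of_eq hdsw)
        have hadj' : G.Adj w t := hadj.symm
        have hts : t ≠ s := hst.symm
        by_cases ht1 : t ∈ P1.support
        · exact stepT hP1 hP2 hI hadj' hts hwt.symm ht1
        by_cases ht2 : t ∈ P2.support
        · refine stepT hP2 hP1 ?_ hadj' hts hwt.symm ht2
          rw [Set.inter_comm]; exact hI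
        -- t is off the cycle
        obtain ⟨T0, hT0w⟩ := avoidPath h2c w t s hwt.symm hsw
        have hsC : s ∈ {u | u ∈ P1.support ∨ u ∈ P2.support} :=
          Or.inl (Walk.start_mem_support _)
        have htC : t ∉ {u | u ∈ P1.support ∨ u ∈ P2.support} := by
          intro h
          rcases h with h | h
          · exact ht1 h
          · exact ht2 h
        obtain ⟨z, T1, hzC, hT1sub, hT1first⟩ :=
          firstHit T0 {u | u ∈ P1.support ∨ u ∈ P2.support} hsC htC
        have hT1w : w ∉ T1.support := fun h => hT0w (hT1sub w h)
        set T' := T1.bypass with hT'def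
        have hT'path : T'.IsPath := T1.bypass_isPath
        have hT'sub : ∀ u ∈ T'.support, u ∈ T1.support := fun u hu =>
          T1.support_bypass_subset hu
        have hT'C : ∀ u ∈ T'.support, (u ∈ P1.support ∨ u ∈ P2.support) → u = z :=
          fun u hu h => hT1first u (hT'sub u hu) h
        have hT'w : w ∉ T'.support := fun h => hT1w (hT'sub w h)
        have hzw : z ≠ w := by
          rintro rfl
          exact hT1w (Walk.end_mem_support _)
        rcases hzC with hz1 | hz2
        · exact stepZ hP1 hP2 hI hadj' hts hwt.symm ht1 ht2 hz1 hzw hT'path hT'C hT'w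
        · refine stepZ hP2 hP1 ?_ hadj' hts hwt.symm ht2 ht1 hz2 hzw hT'path ?_ hT'w
          · rw [Set.inter_comm]; exact hI
          · exact fun u hu h => hT'C u hu h.symm

/-- Fan lemma: two internally disjoint paths from `v ∉ C` to distinct points of `C`,
meeting `C` only at their endpoints. -/
lemma fanLemma [Fintype V]
    (h2c : 3 ≤ Fintype.card V ∧ G.Connected ∧
      ∀ v : V, (((⊤ : G.Subgraph).deleteVerts {v}).coe.Connected))
    (C : Set V) (hs : s ∈ C) (ht : t ∈ C) (hst : s ≠ t) (v : V) (hv : v ∉ C) :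
    ∃ x y : V, x ≠ y ∧ x ∈ C ∧ y ∈ C ∧ ∃ (A : G.Walk v x) (B : G.Walk v y),
      A.IsPath ∧ B.IsPath ∧ (∀ u ∈ A.support, u ∈ C → u = x) ∧
      (∀ u ∈ B.support, u ∈ C → u = y) ∧
      (∀ u, u ∈ A.support → u ∈ B.support → u = v) := by
  have hvs : v ≠ s := fun h => hv (h ▸ hs)
  obtain ⟨D1, D2, hD1, hD2, hDI⟩ := twoPaths h2c v s hvs
  have hMem : ∀ u, u ∈ D1.support → u ∈ D2.support → u = v ∨ u = s := by
    intro u h1 h2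
    have h3 : u ∈ ({v, s} : Set V) := by
      rw [← hDI]; exact ⟨h1, h2⟩
    simpa using h3
  obtain ⟨z1, T1, hz1C, hT1sub, hT1first⟩ := firstHit D1 C hs hv
  obtain ⟨z2, T2, hz2C, hT2sub, hT2first⟩ := firstHit D2 C hs hv
  set R1 := T1.bypass with hR1def
  set R2 := T2.bypass with hR2def
  have hR1 : R1.IsPath := T1.bypass_isPath
  have hR2 : R2.IsPath := T2.bypass_isPath
  have hR1D : ∀ u ∈ R1.support, u ∈ D1.support := fun u hu =>
    hT1sub u (T1.support_bypass_subset hu)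
  have hR2D : ∀ u ∈ R2.support, u ∈ D2.support := fun u hu =>
    hT2sub u (T2.support_bypass_subset hu)
  have hR1C : ∀ u ∈ R1.support, u ∈ C → u = z1 := fun u hu h =>
    hT1first u (T1.support_bypass_subset hu) h
  have hR2C : ∀ u ∈ R2.support, u ∈ C → u = z2 := fun u hu h =>
    hT2first u (T2.support_bypass_subset hu) h
  by_cases hz : z1 = z2
  · -- both first hits coincide; detour through the rest of the graph
    subst hz
    obtain ⟨w0, hw0C, hw0z⟩ : ∃ w0, w0 ∈ C ∧ w0 ≠ z1 := by
      by_cases hz1s : z1 = s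
      · exact ⟨t, ht, fun h => hst (h ▸ hz1s).symm⟩
      · exact ⟨s, hs, fun h => hz1s h.symm⟩
    have hvz1 : v ≠ z1 := fun h => hv (h ▸ hz1C)
    obtain ⟨T, hTz⟩ := avoidPath h2c z1 v w0 hvz1 hw0z
    obtain ⟨y0, T3', hy0C, hT3'sub, hT3'first⟩ := firstHit T C hw0C hv
    set T3 := T3'.bypass with hT3def
    have hT3path : T3.IsPath := T3'.bypass_isPath
    have hT3T : ∀ u ∈ T3.support, u ∈ T.support := fun u hu =>
      hT3'sub u (T3'.support_bypass_subset hu)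
    have hT3C : ∀ u ∈ T3.support, u ∈ C → u = y0 := fun u hu h =>
      hT3'first u (T3'.support_bypass_subset hu) h
    have hT3z : z1 ∉ T3.support := fun h => hTz (hT3T z1 h)
    have hy0z : y0 ≠ z1 := fun h => hT3z (h ▸ T3.end_mem_support)
    set S := {u | u ∈ R1.support ∨ u ∈ R2.support} with hSdef
    have hvS : v ∈ S := Or.inl R1.start_mem_support
    have hy0S : y0 ∉ S := by
      rintro (h | h)
      · exact hy0z (hR1C y0 h hy0C)
      · exact hy0z (hR2C y0 h hy0C)
    obtain ⟨u0, W', hu0S, hW'sub, hW'first⟩ := firstHit T3.reverse S hvS hy0S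
    set W := W'.bypass with hWdef
    have hWpath : W.IsPath := W'.bypass_isPath
    have hWT3 : ∀ u ∈ W.support, u ∈ T3.support := by
      intro u hu
      have := hW'sub u (W'.support_bypass_subset hu)
      rwa [Walk.support_reverse, List.mem_reverse] at this
    have hWfirst : ∀ u ∈ W.support, u ∈ S → u = u0 := fun u hu h =>
      hW'first u (W'.support_bypass_subset hu) h
    have hu0z : u0 ≠ z1 := fun h => hT3z (h ▸ hWT3 u0 W.end_mem_support)
    -- the two cases u0 ∈ R1 / u0 ∈ R2 are symmetric
    have key : ∀ (Ra : G.Walk v z1) (Rb : G.Walk v z1), Ra.IsPath → Rb.IsPath →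
        (∀ u ∈ Ra.support, u ∈ C → u = z1) → (∀ u ∈ Rb.support, u ∈ C → u = z1) →
        (∀ u, u ∈ Ra.support → u ∈ Rb.support → u = v ∨ u = s) →
        (∀ u ∈ Ra.support, u ∈ S) → (∀ u ∈ Rb.support, u ∈ S) →
        ∀ (hu0a : u0 ∈ Ra.support),
        ∃ x y : V, x ≠ y ∧ x ∈ C ∧ y ∈ C ∧ ∃ (A : G.Walk v x) (B : G.Walk v y),
          A.IsPath ∧ B.IsPath ∧ (∀ u ∈ A.support, u ∈ C → u = x) ∧
          (∀ u ∈ B.support, u ∈ C → u = y) ∧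
          (∀ u, u ∈ A.support → u ∈ B.support → u = v) := by
      intro Ra Rb hRa hRb hRaC hRbC hab hRaS hRbS hu0a
      have hsz : s ∈ Ra.support → s = z1 := fun h => hRaC s h hs
      have hz1take : z1 ∉ (Ra.takeUntil u0 hu0a).support := by
        intro h
        exact hu0z (end_mem_take hRa hu0a h).symm
      refine ⟨y0, z1, hy0z, hy0C, hz1C,
        (Ra.takeUntil u0 hu0a).append W.reverse, Rb, ?_, hRb, ?_, hRbC, ?_⟩
      · refine appendPath (hRa.takeUntil hu0a) hWpath.reverse ?_
        intro u hu hur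
        rw [Walk.support_reverse, List.mem_reverse] at hur
        exact hWfirst u hur (hRaS u (Ra.support_takeUntil_subset hu0a hu))
      · intro u hu huC
        rw [Walk.mem_support_append_iff] at hu
        rcases hu with hu | hu
        · exfalso
          have h4 := hRaC u (Ra.support_takeUntil_subset hu0a hu) huC
          rw [h4] at hu
          exact hz1take hu
        · rw [Walk.support_reverse, List.mem_reverse] at hu
          exact hT3C u (hWT3 u hu) huC
      · intro u hu hub
        rw [Walk.mem_support_append_iff] at hu
        rcases hu with hu | hu
        · rcases hab u (Ra.support_takeUntil_subset hu0a hu) hub with h | h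
          · exact h
          · exfalso
            rw [h] at hu
            have hsa : s ∈ Ra.support := Ra.support_takeUntil_subset hu0a hu
            rw [hsz hsa] at hu
            exact hz1take hu
        · rw [Walk.support_reverse, List.mem_reverse] at hu
          have hu0' : u = u0 := hWfirst u hu (hRbS u hub)
          subst hu0'
          rcases hab u hu0a hub with h | h
          · exact h
          · exfalso
            apply hu0z
            rw [h]
            exact (hsz (by rw [← h]; exact hu0a)).symm ▸ rfl
    rcases hu0S with hu01 | hu02
    · exact key R1 R2 hR1 hR2 hR1C hR2C
        (fun u h1 h2 => hMem u (hR1D u h1) (hR2D u h2))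
        (fun u hu => Or.inl hu) (fun u hu => Or.inr hu) hu01
    · exact key R2 R1 hR2 hR1 hR2C hR1C
        (fun u h1 h2 => hMem u (hR1D u h2) (hR2D u h1))
        (fun u hu => Or.inr hu) (fun u hu => Or.inl hu) hu02
  · -- distinct first hits: the two truncations already form a fan
    refine ⟨z1, z2, hz, hz1C, hz2C, R1, R2, hR1, hR2, hR1C, hR2C, ?_⟩
    intro u h1 h2
    rcases hMem u (hR1D u h1) (hR2D u h2) with h | h
    · exact h
    · exfalso
      exact hz ((hR1C u h1 (h ▸ hs)).symm.trans (hR2C u h2 (h ▸ hs)))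

/-- Reroute, ordered version: both fan feet on `P`, with `x` before `y`. -/
lemma rerouteOrd {P Q : G.Walk s t} (hP : P.IsPath) (hQ : Q.IsPath)
    (hPQ : {u | u ∈ P.support} ∩ {u | u ∈ Q.support} = ({s, t} : Set V))
    {v x y : V} (hxy : x ≠ y) (hx : x ∈ P.support)
    (hy' : y ∈ (P.dropUntil x hx).support)
    {A : G.Walk v x} {B : G.Walk v y} (hA : A.IsPath) (hB : B.IsPath)
    (hAC : ∀ u ∈ A.support, (u ∈ P.support ∨ u ∈ Q.support) → u = x)
    (hBC : ∀ u ∈ B.support, (u ∈ P.support ∨ u ∈ Q.support) → u = y)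
    (hAB : ∀ u, u ∈ A.support → u ∈ B.support → u = v) :
    ∃ p q : G.Walk s t, p.IsPath ∧ q.IsPath ∧ v ∈ p.support ∧
      {u | u ∈ p.support} ∩ {u | u ∈ q.support} = ({s, t} : Set V) := by
  have hmem : ∀ u, u ∈ P.support → u ∈ Q.support → u = s ∨ u = t := by
    intro u h1 h2
    have h3 : u ∈ ({s, t} : Set V) := by rw [← hPQ]; exact ⟨h1, h2⟩
    simpa using h3
  set D := P.dropUntil x hx with hD
  have hDpath : D.IsPath := hP.dropUntil hx
  set W1 := P.takeUntil x hx with hW1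
  have hW1path : W1.IsPath := hP.takeUntil hx
  set W3 := D.dropUntil y hy' with hW3
  have hW3path : W3.IsPath := hDpath.dropUntil hy'
  have hW1P : ∀ u ∈ W1.support, u ∈ P.support := fun u hu =>
    P.support_takeUntil_subset hx hu
  have hDP : ∀ u ∈ D.support, u ∈ P.support := fun u hu =>
    P.support_dropUntil_subset hx hu
  have hW3P : ∀ u ∈ W3.support, u ∈ P.support := fun u hu =>
    hDP u (D.support_dropUntil_subset hy' hu)
  have hxW3 : x ∉ W3.support := by
    intro h
    exact hxy (start_mem_drop hDpath hy' h)
  have hrev : ∀ u, u ∈ A.reverse.support ↔ u ∈ A.support := by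
    intro u; rw [Walk.support_reverse, List.mem_reverse]
  set p : G.Walk s t := W1.append (A.reverse.append (B.append W3)) with hp
  have hmemp : ∀ u, u ∈ p.support ↔
      u ∈ W1.support ∨ u ∈ A.support ∨ u ∈ B.support ∨ u ∈ W3.support := by
    intro u
    rw [hp, Walk.mem_support_append_iff, Walk.mem_support_append_iff,
      Walk.mem_support_append_iff, hrev]
  refine ⟨p, Q, ?_, hQ, ?_, ?_⟩
  · -- p is a path
    have h34 : (B.append W3).IsPath := by
      refine appendPath hB hW3path ?_
      intro u hu hu3
      exact hBC u hu (Or.inl (hW3P u hu3))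
    have h234 : (A.reverse.append (B.append W3)).IsPath := by
      refine appendPath hA.reverse h34 ?_
      intro u hu hu34
      rw [hrev] at hu
      rw [Walk.mem_support_append_iff] at hu34
      rcases hu34 with hu34 | hu34
      · exact hAB u hu hu34
      · exfalso
        have := hAC u hu (Or.inl (hW3P u hu34))
        rw [this] at hu34
        exact hxW3 hu34
    refine appendPath hW1path h234 ?_
    intro u hu hu234
    rw [Walk.mem_support_append_iff, Walk.mem_support_append_iff, hrev] at hu234
    rcases hu234 with hu2 | hu3 | hu4
    · exact hAC u hu2 (Or.inl (hW1P u hu))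
    · exfalso
      have h5 := hBC u hu3 (Or.inl (hW1P u hu))
      rw [h5] at hu
      exact hxy (mem_take_drop hP hx hu (D.support_dropUntil_subset hy'
        W3.start_mem_support)).symm
    · exact mem_take_drop hP hx hu (D.support_dropUntil_subset hy' hu4)
  · rw [hmemp v]
    exact Or.inr (Or.inl A.start_mem_support)
  · ext u
    simp only [Set.mem_inter_iff, Set.mem_setOf_eq, Set.mem_insert_iff, Set.mem_singleton_iff]
    constructor
    · rintro ⟨hup, huq⟩
      rw [hmemp u] at hup
      rcases hup with hu | hu | hu | hu
      · exact hmem u (hW1P u hu) huq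
      · have h5 := hAC u hu (Or.inr huq)
        subst h5
        exact hmem u (hW1P _ W1.end_mem_support) huq
      · have h5 := hBC u hu (Or.inr huq)
        subst h5
        exact hmem u (hW3P _ W3.start_mem_support) huq
      · exact hmem u (hW3P u hu) huq
    · rintro (rfl | rfl)
      · exact ⟨(hmemp u).mpr (Or.inl W1.start_mem_support), Q.start_mem_support⟩
      · exact ⟨(hmemp u).mpr (Or.inr (Or.inr (Or.inr W3.end_mem_support))),
          Q.end_mem_support⟩

/-- Reroute: both fan feet on `P` (any order). -/
lemma reroute {P Q : G.Walk s t} (hP : P.IsPath) (hQ : Q.IsPath)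
    (hPQ : {u | u ∈ P.support} ∩ {u | u ∈ Q.support} = ({s, t} : Set V))
    {v x y : V} (hxy : x ≠ y) (hx : x ∈ P.support) (hy : y ∈ P.support)
    {A : G.Walk v x} {B : G.Walk v y} (hA : A.IsPath) (hB : B.IsPath)
    (hAC : ∀ u ∈ A.support, (u ∈ P.support ∨ u ∈ Q.support) → u = x)
    (hBC : ∀ u ∈ B.support, (u ∈ P.support ∨ u ∈ Q.support) → u = y)
    (hAB : ∀ u, u ∈ A.support → u ∈ B.support → u = v) :
    ∃ p q : G.Walk s t, p.IsPath ∧ q.IsPath ∧ v ∈ p.support ∧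
      {u | u ∈ p.support} ∩ {u | u ∈ q.support} = ({s, t} : Set V) := by
  rcases mem_dropUntil_or P hx hy with hd | hd
  · exact rerouteOrd hP hQ hPQ hxy hx hd hA hB hAC hBC hAB
  · exact rerouteOrd hP hQ hPQ hxy.symm hy hd hB hA hBC hAC
      (fun u h1 h2 => hAB u h2 h1)

lemma support_mapLe (h : G ≤ G') {a b : V} (w : G.Walk a b) :
    (w.mapLe h).support = w.support := by
  induction w with
  | nil => rfl
  | cons hadj q ih => simp [Walk.mapLe, Walk.support_map] at ih ⊢

/-- The K₄-minor when the fan feet are internal to the two different paths. -/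
lemma k4minor {P Q : G.Walk s t} (hP : P.IsPath) (hQ : Q.IsPath)
    (hPQ : {u | u ∈ P.support} ∩ {u | u ∈ Q.support} = ({s, t} : Set V)) (hst : s ≠ t)
    {v x y : V} (hx : x ∈ P.support) (hxs : x ≠ s) (hxt : x ≠ t)
    (hy : y ∈ Q.support) (hys : y ≠ s) (hyt : y ≠ t)
    {A : G.Walk v x} {B : G.Walk v y} (hA : A.IsPath) (hB : B.IsPath)
    (hAC : ∀ u ∈ A.support, (u ∈ P.support ∨ u ∈ Q.support) → u = x)
    (hBC : ∀ u ∈ B.support, (u ∈ P.support ∨ u ∈ Q.support) → u = y)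
    (hAB : ∀ u, u ∈ A.support → u ∈ B.support → u = v) :
    IsMinor (⊤ : SimpleGraph (Fin 4)) (G ⊔ SimpleGraph.fromEdgeSet {s(s, t)}) := by
  set G' : SimpleGraph V := G ⊔ SimpleGraph.fromEdgeSet {s(s, t)} with hG'
  have hGG' : G ≤ G' := le_sup_left
  have hmem : ∀ u, u ∈ P.support → u ∈ Q.support → u = s ∨ u = t := by
    intro u h1 h2
    have h3 : u ∈ ({s, t} : Set V) := by rw [← hPQ]; exact ⟨h1, h2⟩
    simpa using h3
  have hxy : x ≠ y := by
    intro h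
    rcases hmem x hx (h ▸ hy) with h' | h'
    · exact hxs h'
    · exact hxt h'
  set IntP : Set V := {u | u ∈ P.support ∧ u ≠ s ∧ u ≠ t} with hIntP
  set IntQ : Set V := {u | u ∈ Q.support ∧ u ≠ s ∧ u ≠ t} with hIntQ
  set S2 : Set V := IntP ∪ {u | u ∈ A.support} ∪ {u | u ∈ B.support ∧ u ≠ y} with hS2
  set Bf : Fin 4 → Set V := ![{s}, {t}, S2, IntQ] with hBf
  have hxS2 : x ∈ S2 := Or.inl (Or.inl ⟨hx, hxs, hxt⟩)
  have hyQ : y ∈ IntQ := ⟨hy, hys, hyt⟩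
  -- membership helpers
  have hAS2 : ∀ u ∈ A.support, u ∈ S2 := fun u hu => Or.inl (Or.inr hu)
  have hBS2 : ∀ u, u ∈ B.support → u ≠ y → u ∈ S2 := fun u hu hne => Or.inr ⟨hu, hne⟩
  have hvy : v ≠ y := by
    intro h
    have h2 : v = x := hAC v A.start_mem_support (Or.inr (h ▸ hy))
    exact hxy (h2.symm.trans h)
  refine ⟨Bf, ?_, ?_, ?_, ?_⟩
  · -- nonempty
    intro i
    fin_cases i
    · exact ⟨s, rfl⟩
    · exact ⟨t, rfl⟩
    · exact ⟨x, hxS2⟩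
    · exact ⟨y, hyQ⟩
  · -- connectivity
    intro i
    fin_cases i
    · refine induce_connected_of_base s rfl ?_
      intro w hw
      have hw' : w = s := hw
      subst hw'
      refine ⟨Walk.nil, ?_⟩
      intro u hu
      have h6 : u = w := by simpa using hu
      exact h6
    · refine induce_connected_of_base t rfl ?_
      intro w hw
      have hw' : w = t := hw
      subst hw'
      refine ⟨Walk.nil, ?_⟩
      intro u hu
      have h6 : u = w := by simpa using hu
      exact h6
    · -- S2
      refine induce_connected_of_base x hxS2 ?_
      intro w hw
      have hw' : w ∈ S2 := hw
      rcases hw' with (hw | hw) | hw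
      · -- w internal on P
        obtain ⟨seg, hseg⟩ := segPath hP hw.1 hx hw.2.1 hw.2.2 hxs hxt
        refine ⟨seg.mapLe hGG', ?_⟩
        intro u hu
        rw [support_mapLe] at hu
        exact Or.inl (Or.inl (hseg u hu))
      · -- w on A
        refine ⟨(A.dropUntil w hw).mapLe hGG', ?_⟩
        intro u hu
        rw [support_mapLe] at hu
        exact hAS2 u (A.support_dropUntil_subset hw hu)
      · -- w on B, not y
        refine ⟨((B.takeUntil w hw.1).reverse.append A).mapLe hGG', ?_⟩
        intro u hu
        rw [support_mapLe, Walk.mem_support_append_iff, Walk.support_reverse,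
          List.mem_reverse] at hu
        rcases hu with hu | hu
        · refine hBS2 u (B.support_takeUntil_subset hw.1 hu) ?_
          intro h
          rw [h] at hu
          exact hw.2 (end_mem_take hB hw.1 hu).symm
        · exact hAS2 u hu
    · -- IntQ
      refine induce_connected_of_base y hyQ ?_
      intro w hw
      have hw' : w ∈ IntQ := hw
      clear hw
      rename' hw' => hw
      obtain ⟨seg, hseg⟩ := segPath hQ hw.1 hy hw.2.1 hw.2.2 hys hyt
      refine ⟨seg.mapLe hGG', ?_⟩
      intro u hu
      rw [support_mapLe] at hu
      exact hseg u hu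
  · -- pairwise disjoint
    have hsS2 : s ∉ S2 := by
      rintro ((h | h) | h)
      · exact h.2.1 rfl
      · exact hxs (hAC s h (Or.inl P.start_mem_support)).symm
      · exact hys (hBC s h.1 (Or.inl P.start_mem_support)).symm
    have htS2 : t ∉ S2 := by
      rintro ((h | h) | h)
      · exact h.2.2 rfl
      · exact hxt (hAC t h (Or.inl P.end_mem_support)).symm
      · exact hyt (hBC t h.1 (Or.inl P.end_mem_support)).symm
    have hsQ : s ∉ IntQ := fun h => h.2.1 rfl
    have htQ : t ∉ IntQ := fun h => h.2.2 rfl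
    have D01 : Disjoint ({s} : Set V) {t} := by simp [hst]
    have D02 : Disjoint ({s} : Set V) S2 := Set.disjoint_singleton_left.mpr hsS2
    have D03 : Disjoint ({s} : Set V) IntQ := Set.disjoint_singleton_left.mpr hsQ
    have D12 : Disjoint ({t} : Set V) S2 := Set.disjoint_singleton_left.mpr htS2
    have D13 : Disjoint ({t} : Set V) IntQ := Set.disjoint_singleton_left.mpr htQ
    have D23 : Disjoint S2 IntQ := by
      rw [Set.disjoint_left]
      rintro u ((h | h) | h) hq
      · rcases hmem u h.1 hq.1 with h' | h'
        · exact h.2.1 h'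
        · exact h.2.2 h'
      · have h5 := hAC u h (Or.inr hq.1)
        subst h5
        rcases hmem u hx hq.1 with h' | h'
        · exact hxs h'
        · exact hxt h'
      · exact h.2 (hBC u h.1 (Or.inr hq.1))
    intro i j hij
    fin_cases i <;> fin_cases j <;>
      first
        | exact absurd rfl hij
        | exact D01 | exact D01.symm | exact D02 | exact D02.symm
        | exact D03 | exact D03.symm | exact D12 | exact D12.symm
        | exact D13 | exact D13.symm | exact D23 | exact D23.symm
  · -- adjacency
    have hadjST : G'.Adj s t := by
      refine Or.inr ?_
      rw [SimpleGraph.fromEdgeSet_adj]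
      exact ⟨rfl, hst⟩
    obtain ⟨aP, haP, haPmem, haPs, haPt⟩ := exists_int_neighbor hP hx hxs hxt
    obtain ⟨aQ, haQ, haQmem, haQs, haQt⟩ := exists_int_neighbor hQ hy hys hyt
    have hx' : x ∈ P.reverse.support := by rwa [Walk.support_reverse, List.mem_reverse]
    have hy' : y ∈ Q.reverse.support := by rwa [Walk.support_reverse, List.mem_reverse]
    obtain ⟨bP, hbP, hbPmem, hbPt, hbPs⟩ := exists_int_neighbor hP.reverse hx' hxt hxs
    obtain ⟨bQ, hbQ, hbQmem, hbQt, hbQs⟩ := exists_int_neighbor hQ.reverse hy' hyt hys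
    rw [Walk.support_reverse, List.mem_reverse] at hbPmem hbQmem
    obtain ⟨b0, hb0adj, hb0mem, hb0y⟩ := exists_neighbor_end B hvy
    have haPS2 : aP ∈ S2 := Or.inl (Or.inl ⟨haPmem, haPs, haPt⟩)
    have hbPS2 : bP ∈ S2 := Or.inl (Or.inl ⟨hbPmem, hbPs, hbPt⟩)
    have haQ3 : aQ ∈ IntQ := ⟨haQmem, haQs, haQt⟩
    have hbQ3 : bQ ∈ IntQ := ⟨hbQmem, hbQs, hbQt⟩
    have hb0S2 : b0 ∈ S2 := hBS2 b0 hb0mem hb0y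
    intro i j hadj
    have hij : i ≠ j := hadj.ne
    fin_cases i <;> fin_cases j <;>
      first
        | exact absurd rfl hij
        | exact ⟨s, rfl, t, rfl, hadjST⟩
        | exact ⟨t, rfl, s, rfl, hadjST.symm⟩
        | exact ⟨s, rfl, aP, haPS2, hGG' haP⟩
        | exact ⟨aP, haPS2, s, rfl, (hGG' haP).symm⟩
        | exact ⟨s, rfl, aQ, haQ3, hGG' haQ⟩
        | exact ⟨aQ, haQ3, s, rfl, (hGG' haQ).symm⟩
        | exact ⟨t, rfl, bP, hbPS2, hGG' hbP⟩
        | exact ⟨bP, hbPS2, t, rfl, (hGG' hbP).symm⟩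
        | exact ⟨t, rfl, bQ, hbQ3, hGG' hbQ⟩
        | exact ⟨bQ, hbQ3, t, rfl, (hGG' hbQ).symm⟩
        | exact ⟨b0, hb0S2, y, hyQ, hGG' hb0adj⟩
        | exact ⟨y, hyQ, b0, hb0S2, (hGG' hb0adj).symm⟩

end Helpers

/-- In a parallel SP-network `G` with source `s` and sink `t` (here: `G` itself
is 2-connected and `G + st` has no `K₄` minor), for every internal vertex `v`
there are two internally disjoint `s`–`t` paths, one of them through `v`. -/
theorem parallel_sp_two_paths {V : Type*} [Fintype V]
    (G : SimpleGraph V) (s t : V) (hst : s ≠ t)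
    (hSP : ¬ IsMinor (⊤ : SimpleGraph (Fin 4)) (G ⊔ SimpleGraph.fromEdgeSet {s(s, t)}))
    (h2c : TwoConnected G) :
    ∀ v : V, v ≠ s → v ≠ t →
      ∃ p q : G.Walk s t, p.IsPath ∧ q.IsPath ∧ v ∈ p.support ∧
        {x | x ∈ p.support} ∩ {x | x ∈ q.support} = ({s, t} : Set V) := by
  classical
  intro v hvs hvt
  have h2c' : 3 ≤ Fintype.card V ∧ G.Connected ∧
      ∀ v : V, (((⊤ : G.Subgraph).deleteVerts {v}).coe.Connected) := h2c
  obtain ⟨P1, P2, hP1, hP2, hI⟩ := twoPaths h2c' s t hst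
  have hI' : {x | x ∈ P2.support} ∩ {x | x ∈ P1.support} = ({s, t} : Set V) := by
    rw [Set.inter_comm]; exact hI
  by_cases hv1 : v ∈ P1.support
  · exact ⟨P1, P2, hP1, hP2, hv1, hI⟩
  by_cases hv2 : v ∈ P2.support
  · exact ⟨P2, P1, hP2, hP1, hv2, hI'⟩
  set C : Set V := {u | u ∈ P1.support ∨ u ∈ P2.support} with hC
  have hsC : s ∈ C := Or.inl P1.start_mem_support
  have htC : t ∈ C := Or.inl P1.end_mem_support
  have hvC : v ∉ C := fun h => h.elim hv1 hv2
  obtain ⟨x, y, hxy, hxC, hyC, A, B, hA, hB, hAC, hBC, hAB⟩ :=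
    fanLemma h2c' C hsC htC hst v hvC
  have hAC1 : ∀ u ∈ A.support, (u ∈ P1.support ∨ u ∈ P2.support) → u = x :=
    fun u hu h => hAC u hu h
  have hBC1 : ∀ u ∈ B.support, (u ∈ P1.support ∨ u ∈ P2.support) → u = y :=
    fun u hu h => hBC u hu h
  have hAC2 : ∀ u ∈ A.support, (u ∈ P2.support ∨ u ∈ P1.support) → u = x :=
    fun u hu h => hAC u hu h.symm
  have hBC2 : ∀ u ∈ B.support, (u ∈ P2.support ∨ u ∈ P1.support) → u = y :=
    fun u hu h => hBC u hu h.symm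
  by_cases hxst : x = s ∨ x = t
  · have hxP1 : x ∈ P1.support := by
      rcases hxst with rfl | rfl
      · exact P1.start_mem_support
      · exact P1.end_mem_support
    have hxP2 : x ∈ P2.support := by
      rcases hxst with rfl | rfl
      · exact P2.start_mem_support
      · exact P2.end_mem_support
    rcases hyC with hy1 | hy2
    · exact reroute hP1 hP2 hI hxy hxP1 hy1 hA hB hAC1 hBC1 hAB
    · exact reroute hP2 hP1 hI' hxy hxP2 hy2 hA hB hAC2 hBC2 hAB
  · push_neg at hxst
    by_cases hyst : y = s ∨ y = t
    · have hyP1 : y ∈ P1.support := by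
        rcases hyst with rfl | rfl
        · exact P1.start_mem_support
        · exact P1.end_mem_support
      have hyP2 : y ∈ P2.support := by
        rcases hyst with rfl | rfl
        · exact P2.start_mem_support
        · exact P2.end_mem_support
      rcases hxC with hx1 | hx2
      · exact reroute hP1 hP2 hI hxy hx1 hyP1 hA hB hAC1 hBC1 hAB
      · exact reroute hP2 hP1 hI' hxy hx2 hyP2 hA hB hAC2 hBC2 hAB
    · push_neg at hyst
      rcases hxC with hx1 | hx2 <;> rcases hyC with hy1 | hy2
      · exact reroute hP1 hP2 hI hxy hx1 hy1 hA hB hAC1 hBC1 hAB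
      · exact absurd (k4minor hP1 hP2 hI hst hx1 hxst.1 hxst.2 hy2 hyst.1 hyst.2
          hA hB hAC1 hBC1 hAB) hSP
      · exact absurd (k4minor hP2 hP1 hI' hst hx2 hxst.1 hxst.2 hy1 hyst.1 hyst.2
          hA hB hAC2 hBC2 hAB) hSP
      · exact reroute hP2 hP1 hI' hxy hx2 hy2 hA hB hAC2 hBC2 hAB
end

section
/- The exponential generating function $R(x) = \sum_{n \ge 1} n^{n-1} x^n / n!$ of rooted labelled trees satisfies $R(x) = x e^{R(x)}$ for $|x| < e^{-1}$, and $R$ is the unique power series solution $y(x)$ of $y = x e^y$ with $y(0) = 0$. -/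
open Nat

/-- The exponential of a formal power series with zero constant term, defined
coefficientwise by `exp y = ∑ yⁿ/n!` (the truncation at `n = k` is exact for the
`k`-th coefficient when `y` has zero constant term). -/
noncomputable def expPS (y : PowerSeries ℝ) : PowerSeries ℝ :=
  PowerSeries.mk fun k =>
    ∑ n ∈ Finset.range (k + 1), PowerSeries.coeff k (y ^ n) / (n ! : ℝ)

/-- The exponential generating function of rooted labelled (Cayley) trees,
`R(x) = ∑_{n ≥ 1} n^(n-1) xⁿ / n!`, as a formal power series. -/
noncomputable def treeSeries : PowerSeries ℝ :=
  PowerSeries.mk fun n => if n = 0 then 0 else (n : ℝ) ^ (n - 1) / (n ! : ℝ)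

section
open Finset Polynomial


lemma alt_sum_eval : ∀ (n : ℕ) (p : Polynomial ℝ), p.degree < n →
    ∑ k ∈ Finset.range (n + 1), (-1 : ℝ) ^ k * (n.choose k) * p.eval (k : ℝ) = 0 := by
  intro n
  induction n with
  | zero =>
    intro p hp
    have : p = 0 := degree_eq_bot.mp (Nat.WithBot.lt_zero_iff.mp (by exact_mod_cast hp))
    simp [this]
  | succ n ih =>
    intro p hp
    by_cases hp0 : p = 0
    · simp [hp0]
    set q : Polynomial ℝ := p.comp (X + C 1) - p with hqdef
    have hqd : q.degree < n := by
      have hc0 : p.comp (X + C 1) ≠ 0 := comp_X_add_C_ne_zero_iff.mpr hp0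
      have h1 : (p.comp (X + C 1)).degree = p.degree := by
        rw [degree_eq_natDegree hc0, degree_eq_natDegree hp0]
        rw [natDegree_comp, natDegree_X_add_C, mul_one]
      have h2 : (p.comp (X + C 1)).leadingCoeff = p.leadingCoeff := by
        rw [leadingCoeff_comp (by rw [natDegree_X_add_C]; exact one_ne_zero)]
        rw [leadingCoeff_X_add_C, one_pow, mul_one]
      have h3 : q.degree < p.degree := h1 ▸ degree_sub_lt h1 hc0 h2
      have h4 : p.degree ≤ (n : ℕ) := by
        rw [degree_eq_natDegree hp0] at hp ⊢
        exact_mod_cast Nat.lt_succ_iff.mp (by exact_mod_cast hp)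
      exact lt_of_lt_of_le h3 h4
    set f : ℕ → ℝ := fun k => (-1 : ℝ) ^ k * (n.choose k) * p.eval (k : ℝ) with hfdef
    set F : ℕ → ℝ := fun k => (-1 : ℝ) ^ k * ((n+1).choose k) * p.eval (k : ℝ) with hFdef
    have termsplit : ∀ j ∈ Finset.range (n+1), F (j+1)
        = f (j+1) - (-1 : ℝ) ^ j * (n.choose j) * p.eval (((j+1 : ℕ)) : ℝ) := by
      intro j _
      have hcast : (((n+1).choose (j+1) : ℕ) : ℝ) = (n.choose j : ℝ) + (n.choose (j+1) : ℝ) := by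
        rw [Nat.choose_succ_succ]; push_cast; ring
      simp only [hfdef, hFdef, hcast]
      push_cast
      ring
    have hA : ∑ k ∈ Finset.range (n + 2), F k
        = (∑ j ∈ Finset.range (n+1), f (j+1))
          - (∑ j ∈ Finset.range (n+1), (-1 : ℝ) ^ j * (n.choose j) * p.eval (((j+1 : ℕ)) : ℝ))
          + F 0 := by
      rw [Finset.sum_range_succ' F (n+1), Finset.sum_congr rfl termsplit, Finset.sum_sub_distrib]
    have hB : ∑ j ∈ Finset.range (n+1), f (j+1) + f 0
        = ∑ k ∈ Finset.range (n+1), f k + f (n+1) := by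
      rw [← Finset.sum_range_succ' f (n+1), Finset.sum_range_succ]
    have hfn1 : f (n+1) = 0 := by simp [hfdef]
    have hF0f0 : F 0 = f 0 := by simp [hfdef, hFdef]
    have hqeval : ∀ k ∈ Finset.range (n+1), (-1 : ℝ) ^ k * (n.choose k) * q.eval (k : ℝ)
        = (-1 : ℝ) ^ k * (n.choose k) * p.eval (((k+1 : ℕ)) : ℝ) - f k := by
      intro k _
      simp only [hqdef, hfdef, eval_sub, eval_comp, eval_add, eval_X, eval_C]
      push_cast
      ring
    have hrec := ih q hqd
    rw [Finset.sum_congr rfl hqeval, Finset.sum_sub_distrib] at hrec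
    have goal2 : ∑ k ∈ Finset.range (n + 2), F k = 0 := by
      rw [hA, hF0f0]
      linarith [hB, hrec, hfn1]
    exact goal2

noncomputable def QP (n : ℕ) : Polynomial ℝ :=
  ∑ k ∈ Finset.range (n+1),
    Polynomial.C ((n.choose k : ℝ) * ((1:ℝ)+k)^(k-1)) * (Polynomial.X + Polynomial.C ((n:ℝ) - k))^(n-k)

lemma abel1 : ∀ n : ℕ, QP n = (Polynomial.X + Polynomial.C ((n:ℝ)+1))^n := by
  intro n
  induction n with
  | zero => simp [QP]
  | succ n ih =>
    have hder : Polynomial.derivative (QP (n+1))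
        = Polynomial.C ((n:ℝ)+1) * (Polynomial.X + Polynomial.C ((n:ℝ)+2))^n := by
      have hc : (1:ℝ) + ((n:ℝ)+1) = (n:ℝ)+2 := by ring
      have hcomp : (QP n).comp (Polynomial.X + Polynomial.C 1)
          = (Polynomial.X + Polynomial.C ((n:ℝ)+2))^n := by
        rw [ih, pow_comp, add_comp, X_comp, C_comp, add_assoc, ← C_add, hc]
      rw [← hcomp, QP, derivative_sum, Finset.sum_range_succ, Nat.sub_self, pow_zero, mul_one,
        derivative_C, add_zero, QP, Polynomial.sum_comp, Finset.mul_sum]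
      apply Finset.sum_congr rfl
      intro k hk
      have hkn : k ≤ n := Nat.lt_succ_iff.mp (Finset.mem_range.mp hk)
      rw [derivative_C_mul, derivative_X_add_C_pow]
      rw [mul_comp, C_comp, pow_comp, add_comp, X_comp, C_comp]
      have hnat : (n+1).choose k * (n+1-k) = (n+1) * n.choose k :=
        ((Nat.add_one_mul_choose_eq n k).trans (Nat.choose_succ_right_eq (n+1) k)).symm
      have hchoose : (((n+1).choose k : ℕ) : ℝ) * ((n+1-k : ℕ) : ℝ)
          = ((n:ℝ)+1) * ((n.choose k : ℕ) : ℝ) := by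
        exact_mod_cast hnat
      have hexp : n + 1 - k - 1 = n - k := by omega
      have hconst : ((n+1:ℕ):ℝ) - (k:ℝ) = 1 + ((n:ℝ) - k) := by push_cast; ring
      rw [hexp, hconst, add_assoc, ← C_add]
      rw [← mul_assoc, ← mul_assoc, ← C_mul]
      congr 1
      rw [← Polynomial.C_mul, Polynomial.C_inj]
      linear_combination (((1:ℝ)+(k:ℝ))^(k-1)) * hchoose
    have hdeg : ((Polynomial.X + Polynomial.C (1:ℝ))^n).degree < ((n+1 : ℕ) : WithBot ℕ) := by
      refine lt_of_le_of_lt (Polynomial.degree_le_natDegree) ?_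
      rw [Polynomial.natDegree_pow, Polynomial.natDegree_X_add_C, mul_one]
      exact_mod_cast Nat.lt_succ_self n
    have halt := alt_sum_eval (n+1) ((Polynomial.X + Polynomial.C (1:ℝ))^n) hdeg
    have heval : (QP (n+1)).eval (-((n:ℝ)+2)) = 0 := by
      rw [QP, Polynomial.eval_finset_sum]
      have hterm : ∀ k ∈ Finset.range (n+2),
          (Polynomial.C (((n+1).choose k : ℝ) * ((1:ℝ)+k)^(k-1))
            * (Polynomial.X + Polynomial.C (((n+1:ℕ):ℝ) - k))^((n+1)-k)).eval (-((n:ℝ)+2))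
          = (-1:ℝ)^(n+1) * ((-1:ℝ)^k * (((n+1).choose k : ℕ) : ℝ)
              * ((Polynomial.X + Polynomial.C (1:ℝ))^n).eval (k:ℝ)) := by
        intro k hk
        have hkn : k ≤ n+1 := Nat.lt_succ_iff.mp (Finset.mem_range.mp hk)
        rw [Polynomial.eval_mul, Polynomial.eval_C, Polynomial.eval_pow, Polynomial.eval_add,
          Polynomial.eval_X, Polynomial.eval_C, Polynomial.eval_pow, Polynomial.eval_add,
          Polynomial.eval_X, Polynomial.eval_C]
        have hbase : -((n:ℝ)+2) + (((n+1:ℕ):ℝ) - k) = -((1:ℝ)+k) := by push_cast; ring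
        rw [hbase, neg_pow]
        have h1 : ((-1:ℝ))^(n+1-k) * (-1)^k = (-1)^(n+1) := by
          rw [← pow_add]; congr 1; omega
        have h2 : ((-1:ℝ))^k * (-1)^k = 1 := by
          rw [← pow_add]; exact Even.neg_one_pow ⟨k, rfl⟩
        have h3 : (-1:ℝ)^(n+1-k) = (-1)^(n+1) * (-1)^k := by
          rw [← h1, mul_assoc, h2, mul_one]
        have h4 : ((1:ℝ)+k)^(k-1) * ((1:ℝ)+k)^(n+1-k) = ((k:ℝ)+1)^n := by
          rcases Nat.eq_zero_or_pos k with hk0 | hk0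
          · subst hk0; norm_num
          · rw [← pow_add]
            have : k - 1 + (n+1-k) = n := by omega
            rw [this]; ring_nf
        rw [h3]
        linear_combination ((-1:ℝ)^(n+1) * (-1:ℝ)^k * (((n+1).choose k : ℕ):ℝ)) * h4
      rw [Finset.sum_congr rfl hterm, ← Finset.mul_sum, halt, mul_zero]
    have hevalR : ((Polynomial.X + Polynomial.C (((n+1:ℕ):ℝ)+1))^(n+1)).eval (-((n:ℝ)+2)) = 0 := by
      rw [Polynomial.eval_pow, Polynomial.eval_add, Polynomial.eval_X, Polynomial.eval_C]
      have : -((n:ℝ)+2) + (((n+1:ℕ):ℝ)+1) = 0 := by push_cast; ring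
      rw [this]
      exact zero_pow (by omega)
    have hderR : Polynomial.derivative ((Polynomial.X + Polynomial.C (((n+1:ℕ):ℝ)+1))^(n+1))
        = Polynomial.C ((n:ℝ)+1) * (Polynomial.X + Polynomial.C ((n:ℝ)+2))^n := by
      rw [Polynomial.derivative_X_add_C_pow]
      have e1 : ((n+1:ℕ):ℝ) = (n:ℝ)+1 := by push_cast; ring
      have e2 : (n:ℝ)+1+1 = (n:ℝ)+2 := by ring
      have e3 : (n+1) - 1 = n := by omega
      rw [e3, e1, e2]
    have hd0 : Polynomial.derivative
        (QP (n+1) - (Polynomial.X + Polynomial.C (((n+1:ℕ):ℝ)+1))^(n+1)) = 0 := by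
      rw [Polynomial.derivative_sub, hder, hderR, sub_self]
    have hCeq := Polynomial.eq_C_of_derivative_eq_zero hd0
    have he : (QP (n+1) - (Polynomial.X + Polynomial.C (((n+1:ℕ):ℝ)+1))^(n+1)).eval (-((n:ℝ)+2)) = 0 := by
      rw [Polynomial.eval_sub, heval, hevalR, sub_zero]
    rw [hCeq, Polynomial.eval_C] at he
    rw [he, map_zero] at hCeq
    exact sub_eq_zero.mp hCeq

lemma abel_eval1 (n : ℕ) : ∑ k ∈ Finset.range (n+1),
    (n.choose k : ℝ) * ((1:ℝ)+k)^(k-1) * ((1:ℝ) + ((n:ℝ) - k))^(n-k) = ((n:ℝ)+2)^n := by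
  have h := congrArg (Polynomial.eval (1:ℝ)) (abel1 n)
  unfold QP at h
  rw [Polynomial.eval_finset_sum, Polynomial.eval_pow, Polynomial.eval_add, Polynomial.eval_X,
    Polynomial.eval_C] at h
  have h2 : ∀ k ∈ Finset.range (n+1),
      (Polynomial.C ((n.choose k : ℝ) * ((1:ℝ)+k)^(k-1))
        * (Polynomial.X + Polynomial.C ((n:ℝ) - k))^(n-k)).eval 1
      = (n.choose k : ℝ) * ((1:ℝ)+k)^(k-1) * ((1:ℝ) + ((n:ℝ) - k))^(n-k) := by
    intro k _
    rw [Polynomial.eval_mul, Polynomial.eval_C, Polynomial.eval_pow, Polynomial.eval_add,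
      Polynomial.eval_X, Polynomial.eval_C]
  rw [Finset.sum_congr rfl h2] at h
  rw [h]
  norm_num
  ring_nf

lemma key_id (k : ℕ) : ∑ j ∈ Finset.range (k+1),
    (k.choose j : ℝ) * ((j:ℝ)+1)^j * ((k:ℝ)+1-j)^(k-1-j) = ((k:ℝ)+2)^k := by
  rw [← Finset.sum_range_reflect]
  rw [← abel_eval1 k]
  apply Finset.sum_congr rfl
  intro j hj
  have hjk : j ≤ k := Nat.lt_succ_iff.mp (Finset.mem_range.mp hj)
  have e0 : k + 1 - 1 - j = k - j := by omega
  rw [e0]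
  rw [Nat.choose_symm hjk]
  have e2 : ((k - j : ℕ) : ℝ) = (k:ℝ) - j := by
    rw [Nat.cast_sub hjk]
  have e3 : k - 1 - (k - j) = j - 1 := by omega
  rw [e2, e3]
  have e5 : ((k:ℝ) + 1 - ((k:ℝ) - j)) = (j:ℝ)+1 := by ring
  rw [e5]
  ring

noncomputable def eSeq (k : ℕ) : ℝ := ((k:ℝ)+1)^k / ((k+1)! : ℝ)

lemma eSeq_rec (k : ℕ) : ((k:ℝ)+1) * eSeq (k+1)
    = ∑ j ∈ Finset.range (k+1), ((j:ℝ)+1) * eSeq j * eSeq (k-j) := by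
  have fac_ne : ∀ m : ℕ, ((m ! : ℕ) : ℝ) ≠ 0 := fun m =>
    Nat.cast_ne_zero.mpr (Nat.factorial_ne_zero m)
  have hterm : ∀ j ∈ Finset.range (k+1), ((j:ℝ)+1) * eSeq j * eSeq (k-j)
      = (k.choose j : ℝ) * ((j:ℝ)+1)^j * ((k:ℝ)+1-j)^(k-1-j) / (k ! : ℝ) := by
    intro j hj
    have hjk : j ≤ k := Nat.lt_succ_iff.mp (Finset.mem_range.mp hj)
    unfold eSeq
    rw [Nat.cast_choose ℝ hjk]
    have e2 : ((k - j : ℕ) : ℝ) = (k:ℝ) - j := Nat.cast_sub hjk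
    rw [e2]
    have hfj : ((j+1)! : ℝ) = ((j:ℝ)+1) * (j ! : ℝ) := by
      rw [Nat.factorial_succ]; push_cast; ring
    have hfkj : (((k-j)+1)! : ℝ) = ((k:ℝ)-j+1) * ((k-j)! : ℝ) := by
      rw [Nat.factorial_succ]; push_cast [Nat.cast_sub hjk]; ring
    rw [hfj, hfkj]
    rcases Nat.lt_or_ge j k with hlt | hge
    · have hkj : k - j = (k - 1 - j) + 1 := by omega
      have hpow2 : ((k:ℝ)-j+1)^(k-j) = ((k:ℝ)-j+1)^(k-1-j) * ((k:ℝ)-j+1) := by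
        rw [hkj, pow_succ]
      rw [hpow2]
      have h1 : ((j:ℝ)+1) ≠ 0 := by positivity
      have h2 : ((k:ℝ)-j+1) ≠ 0 := by
        have : (j:ℝ) ≤ k := by exact_mod_cast hjk
        nlinarith
      field_simp
      ring
    · have hjk2 : j = k := le_antisymm hjk hge
      subst hjk2
      simp [Nat.sub_self]
      have h1 : ((j:ℝ)+1) ≠ 0 := by positivity
      field_simp
  rw [Finset.sum_congr rfl hterm, ← Finset.sum_div, key_id]
  unfold eSeq
  have hfk2 : ((k+1+1)! : ℝ) = ((k:ℝ)+2) * (((k:ℝ))+1) * (k ! : ℝ) := by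
    rw [Nat.factorial_succ, Nat.factorial_succ]; push_cast; ring
  rw [hfk2]
  have e7 : ((k+1:ℕ):ℝ)+1 = (k:ℝ)+2 := by push_cast; ring
  rw [e7]
  have h2 : ((k:ℝ)+2) ≠ 0 := by positivity
  have h1 : ((k:ℝ)+1) ≠ 0 := by positivity
  rw [pow_succ]
  field_simp

end
section
open Finset PowerSeries

lemma coeff_pow_eq_zero {y : PowerSeries ℝ} (h0 : PowerSeries.coeff 0 y = 0)
    {n k : ℕ} (h : k < n) : PowerSeries.coeff k (y ^ n) = 0 := by
  have h1 : (1 : ℕ∞) ≤ y.order := by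
    have := PowerSeries.nat_le_order y 1 (by
      intro i hi
      interval_cases i
      exact h0)
    exact_mod_cast this
  have h2 : ∀ m : ℕ, (m : ℕ∞) ≤ (y ^ m).order := by
    intro m
    induction m with
    | zero => simp
    | succ m ih =>
      calc ((m+1 : ℕ) : ℕ∞) = (m : ℕ∞) + 1 := by push_cast; ring
      _ ≤ (y^m).order + y.order := add_le_add ih h1
      _ ≤ ((y^m) * y).order := PowerSeries.le_order_mul _ _
      _ = (y^(m+1)).order := by rw [← pow_succ]
  exact PowerSeries.coeff_of_lt_order k (lt_of_lt_of_le (by exact_mod_cast h) (h2 n))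

lemma coeff_expPS_eq (y : PowerSeries ℝ) (h0 : PowerSeries.coeff 0 y = 0) {k N : ℕ}
    (hN : k ≤ N) : PowerSeries.coeff k (expPS y)
      = ∑ n ∈ Finset.range (N + 1), PowerSeries.coeff k (y ^ n) / (n ! : ℝ) := by
  rw [expPS, PowerSeries.coeff_mk]
  apply Finset.sum_subset (Finset.range_subset_range.mpr (by omega))
  intro n hn hn'
  have : k < n := by
    simp only [Finset.mem_range] at hn hn'
    omega
  rw [coeff_pow_eq_zero h0 this, zero_div]

lemma coeff_expPS_zero (y : PowerSeries ℝ) :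
    PowerSeries.coeff 0 (expPS y) = 1 := by
  rw [expPS, PowerSeries.coeff_mk]
  simp

lemma chain (y : PowerSeries ℝ) (h0 : PowerSeries.coeff 0 y = 0) (k : ℕ) :
    ((k:ℝ)+1) * PowerSeries.coeff (k+1) (expPS y)
      = ∑ j ∈ Finset.range (k+1), ((j:ℝ)+1) * PowerSeries.coeff (j+1) y
          * PowerSeries.coeff (k-j) (expPS y) := by
  rw [coeff_expPS_eq y h0 (le_refl (k+1)), Finset.mul_sum]
  have step1 : ∀ n ∈ Finset.range (k+2),
      ((k:ℝ)+1) * (PowerSeries.coeff (k+1) (y^n) / (n ! : ℝ))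
      = PowerSeries.coeff k (d⁄dX ℝ (y^n)) / (n ! : ℝ) := by
    intro n _
    rw [PowerSeries.coeff_derivative]
    ring
  rw [Finset.sum_congr rfl step1]
  have step2 : ∀ n ∈ Finset.range (k+2), PowerSeries.coeff k (d⁄dX ℝ (y^n)) / (n ! : ℝ)
      = (n:ℝ) * PowerSeries.coeff k ((d⁄dX ℝ y) * y^(n-1)) / (n ! : ℝ) := by
    intro n _
    rw [Derivation.leibniz_pow, smul_eq_mul, map_nsmul, nsmul_eq_mul, mul_comm (y^(n-1))]
  rw [Finset.sum_congr rfl step2]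
  -- peel off the n = 0 term and reindex
  rw [Finset.sum_range_succ' (fun n => (n:ℝ) * PowerSeries.coeff k ((d⁄dX ℝ y) * y^(n-1)) / (n ! : ℝ)) (k+1)]
  simp only [Nat.cast_zero, zero_mul, zero_div, add_zero]
  have step3 : ∀ m ∈ Finset.range (k+1),
      ((m+1 : ℕ):ℝ) * PowerSeries.coeff k ((d⁄dX ℝ y) * y^((m+1)-1)) / (((m+1)! : ℕ) : ℝ)
      = PowerSeries.coeff k ((d⁄dX ℝ y) * y^m) / ((m ! : ℕ) : ℝ) := by
    intro m _
    have : (((m+1)! : ℕ) : ℝ) = ((m+1 : ℕ):ℝ) * ((m ! : ℕ) : ℝ) := by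
      rw [Nat.factorial_succ]; push_cast; ring
    rw [this, Nat.add_sub_cancel]
    have hm1 : ((m+1 : ℕ):ℝ) ≠ 0 := by positivity
    field_simp
  rw [Finset.sum_congr rfl step3]
  have step4 : ∀ m ∈ Finset.range (k+1),
      PowerSeries.coeff k ((d⁄dX ℝ y) * y^m) / ((m ! : ℕ) : ℝ)
      = ∑ j ∈ Finset.range (k+1),
          ((j:ℝ)+1) * PowerSeries.coeff (j+1) y * (PowerSeries.coeff (k-j) (y^m) / ((m ! : ℕ) : ℝ)) := by
    intro m _
    rw [PowerSeries.coeff_mul, Finset.Nat.sum_antidiagonal_eq_sum_range_succ_mk, Finset.sum_div]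
    apply Finset.sum_congr rfl
    intro j _
    rw [PowerSeries.coeff_derivative]
    ring
  rw [Finset.sum_congr rfl step4, Finset.sum_comm]
  apply Finset.sum_congr rfl
  intro j hj
  rw [← Finset.mul_sum]
  congr 1
  have hjk : j ≤ k := Nat.lt_succ_iff.mp (Finset.mem_range.mp hj)
  rw [coeff_expPS_eq y h0 (by omega : k - j ≤ k)]

lemma eSeq_zero : eSeq 0 = 1 := by simp [eSeq]

lemma coeff_tree_zero : PowerSeries.coeff 0 treeSeries = 0 := by
  rw [treeSeries, PowerSeries.coeff_mk]; simp

lemma coeff_tree_succ (k : ℕ) : PowerSeries.coeff (k+1) treeSeries = eSeq k := by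
  rw [treeSeries, PowerSeries.coeff_mk, if_neg (Nat.succ_ne_zero k), Nat.add_sub_cancel, eSeq]
  push_cast
  ring_nf

lemma sol_eq_eSeq (g : ℕ → ℝ) (hg0 : g 0 = 1)
    (hrec : ∀ k : ℕ, ((k:ℝ)+1) * g (k+1)
      = ∑ j ∈ Finset.range (k+1), ((j:ℝ)+1) * g j * g (k-j)) :
    ∀ k, g k = eSeq k := by
  intro k
  induction k using Nat.strong_induction_on with
  | _ k ih =>
    match k with
    | 0 => rw [hg0, eSeq_zero]
    | k+1 =>
      have h1 : ((k:ℝ)+1) ≠ 0 := by positivity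
      have h := hrec k
      rw [Finset.sum_congr rfl (fun j hj => by
        have hjk : j ≤ k := Nat.lt_succ_iff.mp (Finset.mem_range.mp hj)
        rw [ih j (by omega), ih (k-j) (by omega)])] at h
      rw [← eSeq_rec] at h
      exact mul_left_cancel₀ h1 h

lemma sol_eq_eSeq' (g : ℕ → ℝ) (hg0 : g 0 = 1)
    (hrec : ∀ k : ℕ, ((k:ℝ)+1) * g (k+1)
      = ∑ j ∈ Finset.range (k+1), ((j:ℝ)+1) * eSeq j * g (k-j)) :
    ∀ k, g k = eSeq k := by
  intro k
  induction k using Nat.strong_induction_on with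
  | _ k ih =>
    match k with
    | 0 => rw [hg0, eSeq_zero]
    | k+1 =>
      have h1 : ((k:ℝ)+1) ≠ 0 := by positivity
      have h := hrec k
      rw [Finset.sum_congr rfl (fun j hj => by
        have hjk : j ≤ k := Nat.lt_succ_iff.mp (Finset.mem_range.mp hj)
        rw [ih (k-j) (by omega)])] at h
      rw [← eSeq_rec] at h
      exact mul_left_cancel₀ h1 h

lemma coeff_expPS_tree (k : ℕ) : PowerSeries.coeff k (expPS treeSeries) = eSeq k := by
  refine sol_eq_eSeq' (fun k => PowerSeries.coeff k (expPS treeSeries))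
    (coeff_expPS_zero _) (fun k => ?_) k
  rw [chain treeSeries coeff_tree_zero k]
  apply Finset.sum_congr rfl
  intro j _
  rw [coeff_tree_succ]

theorem tree_eq : treeSeries = PowerSeries.X * expPS treeSeries := by
  ext m
  cases m with
  | zero =>
    rw [coeff_tree_zero]
    simp
  | succ k =>
    rw [coeff_tree_succ, PowerSeries.coeff_succ_X_mul, coeff_expPS_tree]

theorem tree_unique (y : PowerSeries ℝ) (h0 : PowerSeries.coeff 0 y = 0)
    (heq : y = PowerSeries.X * expPS y) : y = treeSeries := by
  have hy : ∀ j, PowerSeries.coeff (j+1) y = PowerSeries.coeff j (expPS y) := by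
    intro j
    conv_lhs => rw [heq]
    rw [PowerSeries.coeff_succ_X_mul]
  have hg : ∀ k, PowerSeries.coeff k (expPS y) = eSeq k := by
    refine sol_eq_eSeq (fun k => PowerSeries.coeff k (expPS y)) (coeff_expPS_zero _)
      (fun k => ?_)
    rw [chain y h0 k]
    apply Finset.sum_congr rfl
    intro j _
    rw [hy j]
  ext m
  cases m with
  | zero => rw [h0, coeff_tree_zero]
  | succ k => rw [coeff_tree_succ, hy k, hg k]

lemma eSeq_nonneg (k : ℕ) : 0 ≤ eSeq k := by
  unfold eSeq; positivity

lemma eSeq_le (k : ℕ) : eSeq k ≤ Real.exp 1 ^ (k+1) := by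
  have hsum : Summable (fun n => ((k:ℝ)+1)^n / (n ! : ℝ)) := Real.summable_pow_div_factorial _
  have h1 : ((k:ℝ)+1)^(k+1) / (((k+1)! : ℕ) : ℝ) ≤ Real.exp ((k:ℝ)+1) := by
    calc ((k:ℝ)+1)^(k+1)/(((k+1)! : ℕ):ℝ) ≤ ∑' n, ((k:ℝ)+1)^n/((n ! : ℕ):ℝ) :=
          Summable.le_tsum hsum (k+1) (fun j _ => by positivity)
    _ = Real.exp ((k:ℝ)+1) := by rw [Real.exp_eq_exp_ℝ, NormedSpace.exp_eq_tsum_div]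
  have h0 : eSeq k ≤ ((k:ℝ)+1) * eSeq k := by
    nlinarith [eSeq_nonneg k, Nat.cast_nonneg (α := ℝ) k]
  have h2 : ((k:ℝ)+1) * eSeq k = ((k:ℝ)+1)^(k+1)/(((k+1)! : ℕ) : ℝ) := by
    unfold eSeq; rw [pow_succ]; ring
  have h3 : Real.exp ((k:ℝ)+1) = Real.exp 1 ^ (k+1) := by
    rw [← Real.exp_nat_mul]; push_cast; ring_nf
  linarith

lemma coeff_tree_nonneg (m : ℕ) : 0 ≤ PowerSeries.coeff m treeSeries := by
  cases m with
  | zero => rw [coeff_tree_zero]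
  | succ k => rw [coeff_tree_succ]; exact eSeq_nonneg k

lemma coeff_tree_le (m : ℕ) : PowerSeries.coeff m treeSeries ≤ Real.exp 1 ^ m := by
  cases m with
  | zero => rw [coeff_tree_zero]; norm_num
  | succ k => rw [coeff_tree_succ]; exact eSeq_le k

lemma tree_pow_nonneg : ∀ (n m : ℕ), 0 ≤ PowerSeries.coeff m (treeSeries ^ n) := by
  intro n
  induction n with
  | zero =>
    intro m
    rw [pow_zero, PowerSeries.coeff_one]
    split <;> norm_num
  | succ n ih =>
    intro m
    rw [_root_.pow_succ', PowerSeries.coeff_mul]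
    apply Finset.sum_nonneg
    intro p _
    exact mul_nonneg (coeff_tree_nonneg p.1) (ih p.2)

lemma exp_abs_lt {t : ℝ} (ht : |t| < Real.exp (-1)) : Real.exp 1 * |t| < 1 := by
  have h1 : Real.exp 1 * |t| < Real.exp 1 * Real.exp (-1) :=
    mul_lt_mul_of_pos_left ht (Real.exp_pos 1)
  rw [← Real.exp_add] at h1
  norm_num at h1
  exact h1

lemma summable_tree_norm {t : ℝ} (ht : |t| < Real.exp (-1)) :
    Summable (fun m => ‖PowerSeries.coeff m treeSeries * t^m‖) := by
  apply Summable.of_nonneg_of_le (fun m => norm_nonneg _)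
    (g := fun m => ‖PowerSeries.coeff m treeSeries * t^m‖)
    (f := fun m => (Real.exp 1 * |t|)^m)
  · intro m
    rw [norm_mul, norm_pow, mul_pow, Real.norm_eq_abs, Real.norm_eq_abs,
      abs_of_nonneg (coeff_tree_nonneg m)]
    exact mul_le_mul_of_nonneg_right (coeff_tree_le m) (by positivity)
  · exact summable_geometric_of_lt_one (by positivity) (exp_abs_lt ht)

lemma tree_pow_tsum : ∀ (n : ℕ), ∀ t : ℝ, |t| < Real.exp (-1) →
    Summable (fun m => ‖PowerSeries.coeff m (treeSeries^n) * t^m‖) ∧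
    (∑' m : ℕ, PowerSeries.coeff m (treeSeries^n) * t^m)
      = (∑' m : ℕ, PowerSeries.coeff m treeSeries * t^m)^n := by
  intro n
  induction n with
  | zero =>
    intro t ht
    simp only [pow_zero]
    constructor
    · apply summable_of_ne_finset_zero (s := {0})
      intro m hm
      simp only [Finset.mem_singleton] at hm
      rw [PowerSeries.coeff_one, if_neg hm, zero_mul, norm_zero]
    · rw [tsum_eq_single 0 (fun m hm => by
        rw [PowerSeries.coeff_one, if_neg hm, zero_mul])]
      rw [PowerSeries.coeff_one, if_pos rfl, pow_zero, one_mul]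
  | succ n ih =>
    intro t ht
    obtain ⟨ihs, ihv⟩ := ih t ht
    have hf := summable_tree_norm ht
    have hconv : ∀ m : ℕ, (∑ j ∈ Finset.range (m+1),
        (PowerSeries.coeff j treeSeries * t^j)
          * (PowerSeries.coeff (m-j) (treeSeries^n) * t^(m-j)))
        = PowerSeries.coeff m (treeSeries^(n+1)) * t^m := by
      intro m
      rw [_root_.pow_succ', PowerSeries.coeff_mul, Finset.Nat.sum_antidiagonal_eq_sum_range_succ_mk,
        Finset.sum_mul]
      apply Finset.sum_congr rfl
      intro j hj
      have hjm : j ≤ m := Nat.lt_succ_iff.mp (Finset.mem_range.mp hj)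
      have : t^j * t^(m-j) = t^m := by
        rw [← pow_add]
        congr 1
        omega
      rw [← this]
      ring
    constructor
    · have := summable_norm_sum_mul_range_of_summable_norm hf ihs
      apply Summable.congr this
      intro m
      rw [hconv m]
    · have h5 := tsum_mul_tsum_eq_tsum_sum_range_of_summable_norm hf ihs
      rw [ihv] at h5
      calc ∑' (m : ℕ), PowerSeries.coeff m (treeSeries^(n+1)) * t^m
          = ∑' (m : ℕ), ∑ j ∈ Finset.range (m+1),
              (PowerSeries.coeff j treeSeries * t^j)
                * (PowerSeries.coeff (m-j) (treeSeries^n) * t^(m-j)) :=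
            tsum_congr (fun m => (hconv m).symm)
        _ = (∑' (m : ℕ), PowerSeries.coeff m treeSeries * t^m)
              * (∑' (m : ℕ), PowerSeries.coeff m treeSeries * t^m)^n := h5.symm
        _ = (∑' (m : ℕ), PowerSeries.coeff m treeSeries * t^m)^(n+1) :=
            (_root_.pow_succ' _ n).symm

theorem part1 (x : ℝ) (hx : |x| < Real.exp (-1)) :
    (∑' n : ℕ, ((n + 1 : ℝ) ^ n / ((n + 1)! : ℝ)) * x ^ (n + 1))
      = x * Real.exp (∑' n : ℕ, ((n + 1 : ℝ) ^ n / ((n + 1)! : ℝ)) * x ^ (n + 1)) := by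
  have hax : |(|x|)| < Real.exp (-1) := by rwa [abs_abs]
  have hsum_tree : Summable (fun m => PowerSeries.coeff m treeSeries * x ^ m) :=
    (summable_tree_norm hx).of_norm
  set F : ℝ := ∑' m : ℕ, PowerSeries.coeff m treeSeries * x ^ m with hF
  set P : ℕ × ℕ → ℝ :=
    fun p => PowerSeries.coeff p.2 (treeSeries ^ p.1) * x ^ p.2 / ((p.1)! : ℝ) with hP
  have hPnorm : ∀ n m : ℕ, ‖P (n, m)‖
      = ‖PowerSeries.coeff m (treeSeries ^ n) * x ^ m‖ / ((n)! : ℝ) := by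
    intro n m
    rw [hP]
    simp only []
    rw [Real.norm_eq_abs, Real.norm_eq_abs, abs_div, Nat.abs_cast]
  have hfiber : ∀ n : ℕ, Summable (fun m => ‖P (n, m)‖) := by
    intro n
    have := ((tree_pow_tsum n x hx).1).div_const ((n)! : ℝ)
    apply this.congr
    intro m
    rw [hPnorm n m]
  have hnorm_val : ∀ n m : ℕ, ‖PowerSeries.coeff m (treeSeries ^ n) * x ^ m‖
      = PowerSeries.coeff m (treeSeries ^ n) * |x| ^ m := by
    intro n m
    rw [Real.norm_eq_abs, abs_mul, abs_pow, abs_of_nonneg (tree_pow_nonneg n m)]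
  have htsum_fiber : ∀ n : ℕ, (∑' m : ℕ, ‖P (n, m)‖)
      = (∑' m : ℕ, PowerSeries.coeff m treeSeries * |x| ^ m) ^ n / ((n)! : ℝ) := by
    intro n
    have h1 : (∑' m : ℕ, ‖P (n, m)‖)
        = (∑' m : ℕ, PowerSeries.coeff m (treeSeries ^ n) * |x| ^ m) / ((n)! : ℝ) := by
      rw [← tsum_div_const]
      exact tsum_congr (fun m => by rw [hPnorm n m, hnorm_val n m])
    rw [h1, (tree_pow_tsum n (|x|) hax).2]
  have hPabs : Summable (fun p => ‖P p‖) := by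
    rw [summable_prod_of_nonneg (fun p => norm_nonneg _)]
    refine ⟨hfiber, ?_⟩
    apply Summable.congr (Real.summable_pow_div_factorial
      (∑' m : ℕ, PowerSeries.coeff m treeSeries * |x| ^ m))
    intro n
    exact (htsum_fiber n).symm
  have hPsum : Summable P := hPabs.of_norm
  have hfib2 : ∀ m : ℕ, Summable (fun n => P (n, m)) := by
    intro m
    apply summable_of_ne_finset_zero (s := Finset.range (m+1))
    intro n hn
    have hmn : m < n := by
      simp only [Finset.mem_range] at hn
      omega
    rw [hP]
    simp only []
    rw [coeff_pow_eq_zero coeff_tree_zero hmn, zero_mul, zero_div]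
  have hexpF : Real.exp F = ∑' m : ℕ, eSeq m * x ^ m := by
    rw [Real.exp_eq_exp_ℝ, NormedSpace.exp_eq_tsum_div]
    show (∑' n : ℕ, F ^ n / ((n)! : ℝ)) = ∑' m : ℕ, eSeq m * x ^ m
    have h2 : ∀ n : ℕ, F ^ n / ((n)! : ℝ) = ∑' m : ℕ, P (n, m) := by
      intro n
      rw [hF, ← (tree_pow_tsum n x hx).2, ← tsum_div_const]
    rw [tsum_congr h2]
    have hcomm : ∑' (n : ℕ) (m : ℕ), P (n, m) = ∑' (m : ℕ) (n : ℕ), P (n, m) := by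
      refine (Summable.tsum_comm' ?_ ?_ ?_).symm
      · exact hPsum
      · intro n
        exact (hfiber n).of_norm
      · exact hfib2
    rw [hcomm]
    apply tsum_congr
    intro m
    have hvanish : ∀ n ∉ Finset.range (m+1), P (n, m) = 0 := by
      intro n hn
      have hmn : m < n := by
        simp only [Finset.mem_range] at hn
        omega
      rw [hP]
      simp only []
      rw [coeff_pow_eq_zero coeff_tree_zero hmn, zero_mul, zero_div]
    rw [tsum_eq_sum hvanish]
    have : ∀ n ∈ Finset.range (m+1), P (n, m)
        = (PowerSeries.coeff m (treeSeries ^ n) / ((n)! : ℝ)) * x ^ m := by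
      intro n _
      rw [hP]
      simp only []
      ring
    rw [Finset.sum_congr rfl this, ← Finset.sum_mul]
    congr 1
    rw [← coeff_expPS_tree m, expPS, PowerSeries.coeff_mk]
  have hterm : ∀ n : ℕ, ((n + 1 : ℝ) ^ n / (((n + 1)! : ℕ) : ℝ)) * x ^ (n + 1)
      = PowerSeries.coeff (n+1) treeSeries * x ^ (n+1) := by
    intro n
    rw [coeff_tree_succ]
    unfold eSeq
    push_cast
    ring
  have hFv : F = ∑' n : ℕ, ((n + 1 : ℝ) ^ n / (((n + 1)! : ℕ) : ℝ)) * x ^ (n + 1) := by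
    rw [hF, Summable.tsum_eq_zero_add hsum_tree, coeff_tree_zero, zero_mul, zero_add]
    exact tsum_congr (fun n => (hterm n).symm)
  rw [← hFv]
  rw [hexpF, ← tsum_mul_left]
  have : ∀ m : ℕ, x * (eSeq m * x ^ m) = PowerSeries.coeff (m+1) treeSeries * x ^ (m+1) := by
    intro m
    rw [coeff_tree_succ, pow_succ]
    ring
  rw [tsum_congr this]
  rw [hF, Summable.tsum_eq_zero_add hsum_tree, coeff_tree_zero, zero_mul, zero_add]

end

/-- `R(x) = ∑ n^(n-1) xⁿ/n!` satisfies `R(x) = x e^(R x)` for `|x| < e⁻¹`, and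
`R` is the unique formal power series solution of `y = x e^y` with `y(0) = 0`. -/
theorem tree_function_eq :
    (∀ x : ℝ, |x| < Real.exp (-1) →
      (∑' n : ℕ, ((n + 1 : ℝ) ^ n / ((n + 1)! : ℝ)) * x ^ (n + 1)) =
        x * Real.exp (∑' n : ℕ, ((n + 1 : ℝ) ^ n / ((n + 1)! : ℝ)) * x ^ (n + 1))) ∧
    treeSeries = PowerSeries.X * expPS treeSeries ∧
    ∀ y : PowerSeries ℝ, PowerSeries.coeff 0 y = 0 →
      y = PowerSeries.X * expPS y → y = treeSeries := by
  exact ⟨part1, tree_eq, tree_unique⟩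
end
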